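/- Let p be an odd prime and let (G,γ) be a ℤ/pℤ-colored graph with n vertices and 2n − 1 edges. Then (G,γ) is a cone-Laman graph if and only if its symmetric lift (G̃,φ) is Laman-sparse. -/

import Mathlib

/-!
Preamble: finite directed multigraphs with edge colors in an abelian group
("colored graphs"), gain groups and ρ-rank, the Ross / cone-Laman /
cylinder-Laman sparsity counts, colored Henneberg moves, undirected
multigraphs, (k,ℓ)-sparsity, uncolored Henneberg moves, and symmetric lifts.
-/

/-- A finite directed multigraph with edge colors in `Γ` (a "Γ-colored graph").
Self-loops and parallel edges are allowed. -/
structure CMG (Γ : Type) where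
  V : Type
  E : Type
  finV : Finite V
  finE : Finite E
  src : E → V
  dst : E → V
  color : E → Γ

attribute [instance] CMG.finV CMG.finE

instance {α : Type*} [Finite α] : Finite (Option α) :=
  Finite.of_equiv _ (Equiv.optionEquivSumPUnit.{0} α).symm

namespace CMG

variable {Γ : Type} [AddCommGroup Γ]

/-- `e` is an edge from `a` to `v` with color `c`, in the oriented sense:
either it is stored as `a → v` with color `c`, or as `v → a` with color `-c`
(reversing an edge while negating its color gives the same colored graph). -/
def IsEdgeFromTo (G : CMG Γ) (e : G.E) (a v : G.V) (c : Γ) : Prop :=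
  (G.src e = a ∧ G.dst e = v ∧ G.color e = c) ∨
    (G.src e = v ∧ G.dst e = a ∧ G.color e = -c)

/-- `e` is incident to the vertex `v`. -/
def Incident (G : CMG Γ) (e : G.E) (v : G.V) : Prop :=
  G.src e = v ∨ G.dst e = v

/-- `e` is a self-loop at `v`. -/
def IsLoopAt (G : CMG Γ) (e : G.E) (v : G.V) : Prop :=
  G.src e = v ∧ G.dst e = v

/-- The vertices of the edge-induced subgraph on the edge set `F`. -/
def vertsIn (G : CMG Γ) (F : Set G.E) : Set G.V :=
  {v | ∃ e ∈ F, G.Incident e v}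

/-- `Walk G F u w γ`: there is a walk inside the edge set `F` from `u` to `w`
whose signed color sum (colors of forward-traversed edges added, colors of
backward-traversed edges subtracted) is `γ`. -/
inductive Walk (G : CMG Γ) (F : Set G.E) : G.V → G.V → Γ → Prop
  | nil (v : G.V) : Walk G F v v 0
  | fwd {x : G.V} {γ : Γ} (e : G.E) (he : e ∈ F) (hw : Walk G F (G.dst e) x γ) :
      Walk G F (G.src e) x (G.color e + γ)
  | bwd {x : G.V} {γ : Γ} (e : G.E) (he : e ∈ F) (hw : Walk G F (G.src e) x γ) :
      Walk G F (G.dst e) x (-G.color e + γ)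

/-- `u` and `w` are joined by a walk in the edge set `F`. -/
def Reaches (G : CMG Γ) (F : Set G.E) (u w : G.V) : Prop :=
  ∃ γ, G.Walk F u w γ

/-- The connected component of `v` in the edge set `F`. -/
def comp (G : CMG Γ) (F : Set G.E) (v : G.V) : Set G.V :=
  {w | G.Reaches F v w}

/-- The gain group (ρ-image) of the edge set `F` based at the vertex `v`:
the subgroup of `Γ` generated by the signed color sums of closed walks at `v`. -/
def gainGroup (G : CMG Γ) (F : Set G.E) (v : G.V) : AddSubgroup Γ :=
  AddSubgroup.closure {γ | G.Walk F v v γ}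

/-- The ρ-image of the whole edge set `F` (over all base vertices). -/
def totalGain (G : CMG Γ) (F : Set G.E) : AddSubgroup Γ :=
  AddSubgroup.closure {γ | ∃ v, G.Walk F v v γ}

end CMG

/-- The rank of a subgroup of an abelian group: the minimal cardinality of a
finite generating set. -/
noncomputable def subgroupRank {Γ : Type} [AddCommGroup Γ] (H : AddSubgroup Γ) : ℕ :=
  sInf {n | ∃ s : Finset Γ, s.card = n ∧ AddSubgroup.closure (s : Set Γ) = H}

namespace CMG

variable {Γ : Type} [AddCommGroup Γ]

/-- The number of connected components of the edge-induced subgraph on `F`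
whose ρ-rank is `i`. -/
noncomputable def compCount (G : CMG Γ) (F : Set G.E) (i : ℕ) : ℕ :=
  Set.ncard {S : Set G.V |
    ∃ v ∈ G.vertsIn F, S = G.comp F v ∧ subgroupRank (G.gainGroup F v) = i}

/-- The number of connected components of the whole graph (all vertices,
all edges) whose ρ-rank is `i`. -/
noncomputable def compCountTop (G : CMG Γ) (i : ℕ) : ℕ :=
  Set.ncard {S : Set G.V |
    ∃ v : G.V, S = G.comp Set.univ v ∧ subgroupRank (G.gainGroup Set.univ v) = i}

/-- The Ross count `m' ≤ 2n' - 3c₀' - 2(c₁' + c₂')` for one edge set. -/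
def RossCount (G : CMG Γ) (F : Set G.E) : Prop :=
  (F.ncard : ℤ) ≤ 2 * (G.vertsIn F).ncard - 3 * G.compCount F 0
    - 2 * (G.compCount F 1 + G.compCount F 2)

/-- Ross sparsity: the Ross count holds for every edge-induced subgraph. -/
def IsRossSparse (G : CMG Γ) : Prop :=
  ∀ F : Set G.E, G.RossCount F

/-- A Ross graph: Ross-sparse and the count holds with equality on the whole
graph. -/
def IsRossGraph (G : CMG Γ) : Prop :=
  G.IsRossSparse ∧
    (Nat.card G.E : ℤ) = 2 * Nat.card G.V - 3 * G.compCountTop 0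
      - 2 * (G.compCountTop 1 + G.compCountTop 2)

/-- The cone-Laman count `m' ≤ 2n' - 3c₀' - c₁' - c₂'` for one edge set. -/
def ConeLamanCount (G : CMG Γ) (F : Set G.E) : Prop :=
  (F.ncard : ℤ) ≤ 2 * (G.vertsIn F).ncard - 3 * G.compCount F 0
    - G.compCount F 1 - G.compCount F 2

/-- Cone-Laman sparsity. -/
def IsConeLamanSparse (G : CMG Γ) : Prop :=
  ∀ F : Set G.E, G.ConeLamanCount F

/-- A cone-Laman graph: cone-Laman-sparse with equality on the whole graph. -/
def IsConeLaman (G : CMG Γ) : Prop :=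
  G.IsConeLamanSparse ∧
    (Nat.card G.E : ℤ) = 2 * Nat.card G.V - 3 * G.compCountTop 0
      - G.compCountTop 1 - G.compCountTop 2

/-- The cylinder-Laman count `m' ≤ 2n' + r - 3c₀' - 2(c₁' + c₂')`. -/
def CylinderLamanCount (G : CMG Γ) (F : Set G.E) : Prop :=
  (F.ncard : ℤ) ≤ 2 * (G.vertsIn F).ncard + subgroupRank (G.totalGain F)
    - 3 * G.compCount F 0 - 2 * (G.compCount F 1 + G.compCount F 2)

/-- Cylinder-Laman sparsity. -/
def IsCylinderLamanSparse (G : CMG Γ) : Prop :=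
  ∀ F : Set G.E, G.CylinderLamanCount F

/-- A cylinder-Laman graph: cylinder-Laman-sparse with equality on the whole
graph. -/
def IsCylinderLaman (G : CMG Γ) : Prop :=
  G.IsCylinderLamanSparse ∧
    (Nat.card G.E : ℤ) = 2 * Nat.card G.V + subgroupRank (G.totalGain Set.univ)
      - 3 * G.compCountTop 0 - 2 * (G.compCountTop 1 + G.compCountTop 2)

/-- Isomorphism of colored graphs; an edge may be reversed provided its color
is negated (which represents the same colored graph). -/
def Iso (G H : CMG Γ) : Prop :=
  ∃ (fv : G.V ≃ H.V) (fe : G.E ≃ H.E), ∀ e : G.E,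
    (H.src (fe e) = fv (G.src e) ∧ H.dst (fe e) = fv (G.dst e) ∧
      H.color (fe e) = G.color e) ∨
    (H.src (fe e) = fv (G.dst e) ∧ H.dst (fe e) = fv (G.src e) ∧
      H.color (fe e) = -G.color e)

/-- Delete a vertex and all edges incident to it. -/
def deleteVertex (G : CMG Γ) (v : G.V) : CMG Γ where
  V := {w : G.V // w ≠ v}
  E := {e : G.E // G.src e ≠ v ∧ G.dst e ≠ v}
  finV := inferInstance
  finE := inferInstance
  src := fun e => ⟨G.src e.1, e.2.1⟩
  dst := fun e => ⟨G.dst e.1, e.2.2⟩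
  color := fun e => G.color e.1

/-- Add a single new directed edge from `x` to `y` with color `c`. -/
def addEdge (G : CMG Γ) (x y : G.V) (c : Γ) : CMG Γ where
  V := G.V
  E := Option G.E
  finV := inferInstance
  finE := inferInstance
  src := fun e => e.elim x G.src
  dst := fun e => e.elim y G.dst
  color := fun e => e.elim c G.color

/-- The other endpoint of an edge incident to `v` (junk value on loops). -/
noncomputable def otherEnd (G : CMG Γ) (v : G.V) (e : G.E) : G.V :=
  @ite _ (G.src e = v) (Classical.dec _) (G.dst e) (G.src e)

/-- The color of an edge incident to `v`, read in the direction pointing into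
`v` (junk value on loops). -/
noncomputable def colorInto (G : CMG Γ) (v : G.V) (e : G.E) : Γ :=
  @ite _ (G.dst e = v) (Classical.dec _) (G.color e) (-G.color e)

/-- The colored Henneberg move (H1c): `H` is obtained from `G` by adding one
new vertex `v` and two new edges `av`, `bv` (directed into `v`, which is no
restriction); if `a = b` the two new colors must be distinct. -/
def H1cRel (G H : CMG Γ) : Prop :=
  ∃ (v a b : H.V) (_ : a ≠ v) (_ : b ≠ v) (e₁ e₂ : H.E) (γ₁ γ₂ : Γ),
    e₁ ≠ e₂ ∧
    H.IsEdgeFromTo e₁ a v γ₁ ∧ H.IsEdgeFromTo e₂ b v γ₂ ∧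
    (∀ e, H.Incident e v → e = e₁ ∨ e = e₂) ∧
    (a = b → γ₁ ≠ γ₂) ∧
    Iso G (H.deleteVertex v)

/-- The colored lollipop move (H1c'): `H` is obtained from `G` by adding one
new vertex `v`, one edge `av` with arbitrary color, and one self-loop at `v`
with nonzero color. -/
def H1cpRel (G H : CMG Γ) : Prop :=
  ∃ (v a : H.V) (_ : a ≠ v) (e₁ e₂ : H.E) (γ₁ : Γ),
    e₁ ≠ e₂ ∧
    H.IsEdgeFromTo e₁ a v γ₁ ∧
    H.IsLoopAt e₂ v ∧ H.color e₂ ≠ 0 ∧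
    (∀ e, H.Incident e v → e = e₁ ∨ e = e₂) ∧
    Iso G (H.deleteVertex v)

/-- The colored Henneberg move (H2c): `H` is obtained from `G` by removing an
edge `ab` with color `γ₁ - γ₂`, adding a new vertex `v`, and adding edges
`av`, `bv`, `cv` with colors `γ₁`, `γ₂`, `γ₃` (oriented into `v`, which is no
restriction); parallel new edges must have distinct colors. -/
def H2cRel (G H : CMG Γ) : Prop :=
  ∃ (v a b c : H.V) (ha : a ≠ v) (hb : b ≠ v) (_ : c ≠ v)
      (e₁ e₂ e₃ : H.E) (γ₁ γ₂ γ₃ : Γ),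
    e₁ ≠ e₂ ∧ e₁ ≠ e₃ ∧ e₂ ≠ e₃ ∧
    H.IsEdgeFromTo e₁ a v γ₁ ∧ H.IsEdgeFromTo e₂ b v γ₂ ∧
    H.IsEdgeFromTo e₃ c v γ₃ ∧
    (∀ e, H.Incident e v → e = e₁ ∨ e = e₂ ∨ e = e₃) ∧
    (a = b → γ₁ ≠ γ₂) ∧ (a = c → γ₁ ≠ γ₃) ∧ (b = c → γ₂ ≠ γ₃) ∧
    Iso G ((H.deleteVertex v).addEdge ⟨a, ha⟩ ⟨b, hb⟩ (γ₁ - γ₂))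

/-- The base graph for Ross graphs: two vertices joined by two parallel
directed edges with distinct colors. -/
def IsRossBase (G : CMG Γ) : Prop :=
  ∃ (u v : G.V) (e₁ e₂ : G.E) (γ₁ γ₂ : Γ),
    u ≠ v ∧ e₁ ≠ e₂ ∧
    (∀ w : G.V, w = u ∨ w = v) ∧ (∀ e : G.E, e = e₁ ∨ e = e₂) ∧
    G.IsEdgeFromTo e₁ u v γ₁ ∧ G.IsEdgeFromTo e₂ u v γ₂ ∧ γ₁ ≠ γ₂

/-- The base graph for cone-Laman and cylinder-Laman graphs: a single vertex
with one self-loop carrying a nonzero color. -/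
def IsLoopBase (G : CMG Γ) : Prop :=
  ∃ (v : G.V) (e : G.E),
    (∀ w : G.V, w = v) ∧ (∀ e' : G.E, e' = e) ∧
    G.IsLoopAt e v ∧ G.color e ≠ 0

/-- `Constructible Base R G`: the colored graph `G` can be produced from a
base graph (a graph satisfying `Base`) by a finite sequence of moves from the
relation `R`. -/
inductive Constructible (Base : CMG Γ → Prop) (R : CMG Γ → CMG Γ → Prop) :
    CMG Γ → Prop
  | base (G : CMG Γ) (h : Base G) : Constructible Base R G
  | step (G H : CMG Γ) (hG : Constructible Base R G) (hR : R G H) :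
      Constructible Base R H

/-- The degree of a vertex; a self-loop contributes two. -/
noncomputable def degree (G : CMG Γ) (v : G.V) : ℕ :=
  Nat.card {e : G.E // G.src e = v} + Nat.card {e : G.E // G.dst e = v}

end CMG

/-- Reduce the colors of a `ℤ`-colored graph modulo `p`. -/
def CMG.reduceMod (G : CMG ℤ) (p : ℕ) : CMG (ZMod p) where
  V := G.V
  E := G.E
  finV := G.finV
  finE := G.finE
  src := G.src
  dst := G.dst
  color := fun e => ((G.color e : ℤ) : ZMod p)

/-- An undirected multigraph (possibly infinite), given by the two endpoint
functions of its edges; the orientation of an edge carries no information. -/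
structure UMG where
  V : Type
  E : Type
  fst : E → V
  snd : E → V

namespace UMG

/-- The edge `e` joins `u` and `w`. -/
def Betw (M : UMG) (e : M.E) (u w : M.V) : Prop :=
  (M.fst e = u ∧ M.snd e = w) ∨ (M.fst e = w ∧ M.snd e = u)

/-- `e` is incident to `v`. -/
def Incident (M : UMG) (e : M.E) (v : M.V) : Prop :=
  M.fst e = v ∨ M.snd e = v

/-- `e` is a self-loop. -/
def IsLoop (M : UMG) (e : M.E) : Prop :=
  M.fst e = M.snd e

/-- The vertices of the edge-induced subgraph on the edge set `F`. -/
def uverts (M : UMG) (F : Set M.E) : Set M.V :=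
  {v | ∃ e ∈ F, M.Incident e v}

/-- `(k,ℓ)`-sparsity: every (finite, nonempty) edge-induced subgraph with `n'`
vertices and `m'` edges satisfies `m' ≤ k n' - ℓ`. -/
def Sparse (M : UMG) (k ℓ : ℤ) : Prop :=
  ∀ F : Set M.E, F.Finite → F.Nonempty →
    (F.ncard : ℤ) ≤ k * (M.uverts F).ncard - ℓ

/-- Laman-sparse means `(2,3)`-sparse. -/
def LamanSparse (M : UMG) : Prop :=
  M.Sparse 2 3

/-- `F` is a (finite, nonempty) violation of the Laman count. -/
def ViolatesLaman (M : UMG) (F : Set M.E) : Prop :=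
  F.Finite ∧ F.Nonempty ∧ ¬ ((F.ncard : ℤ) ≤ 2 * (M.uverts F).ncard - 3)

/-- A Laman-circuit: an edge-minimal violation of Laman sparsity. -/
def LamanCircuit (M : UMG) (C : Set M.E) : Prop :=
  M.ViolatesLaman C ∧ ∀ F : Set M.E, F ⊂ C → ¬ M.ViolatesLaman F

/-- Connectivity inside an edge set. -/
def Reaches (M : UMG) (F : Set M.E) : M.V → M.V → Prop :=
  Relation.ReflTransGen (fun u w => ∃ e ∈ F, M.Betw e u w)

/-- The edge-induced subgraph on `F` is connected. -/
def ConnectedOn (M : UMG) (F : Set M.E) : Prop :=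
  ∀ u ∈ M.uverts F, ∀ w ∈ M.uverts F, M.Reaches F u w

/-- The induced sub-multigraph on a set of vertices. -/
def induce (M : UMG) (W : Set M.V) : UMG where
  V := W
  E := {e : M.E // M.fst e ∈ W ∧ M.snd e ∈ W}
  fst := fun e => ⟨M.fst e.1, e.2.1⟩
  snd := fun e => ⟨M.snd e.1, e.2.2⟩

/-- Delete a vertex and all edges incident to it. -/
def deleteVertex (M : UMG) (v : M.V) : UMG :=
  M.induce {w | w ≠ v}

/-- Add a single new edge joining `x` and `y`. -/
def addEdge (M : UMG) (x y : M.V) : UMG where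
  V := M.V
  E := Option M.E
  fst := fun e => e.elim x M.fst
  snd := fun e => e.elim y M.snd

/-- Add a family of new edges indexed by `I`. -/
def addEdges (M : UMG) (I : Type) (x y : I → M.V) : UMG where
  V := M.V
  E := M.E ⊕ I
  fst := Sum.elim M.fst x
  snd := Sum.elim M.snd y

/-- Isomorphism of undirected multigraphs. -/
def Iso (M N : UMG) : Prop :=
  ∃ (fv : M.V ≃ N.V) (fe : M.E ≃ N.E), ∀ e : M.E,
    (N.fst (fe e) = fv (M.fst e) ∧ N.snd (fe e) = fv (M.snd e)) ∨
    (N.fst (fe e) = fv (M.snd e) ∧ N.snd (fe e) = fv (M.fst e))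

/-- The other endpoint of an edge incident to `v` (junk value on loops). -/
noncomputable def otherEnd (M : UMG) (v : M.V) (e : M.E) : M.V :=
  @ite _ (M.fst e = v) (Classical.dec _) (M.snd e) (M.fst e)

/-- The uncolored Henneberg move (H1), adding the vertex `w`: `N` is obtained
from `M` by adding the new vertex `w` together with two edges joining `w` to
the old graph. -/
def H1At (M N : UMG) (w : N.V) : Prop :=
  (∃ e₁ e₂ : N.E, e₁ ≠ e₂ ∧ N.Incident e₁ w ∧ N.Incident e₂ w ∧
      ¬ N.IsLoop e₁ ∧ ¬ N.IsLoop e₂ ∧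
      ∀ e, N.Incident e w → e = e₁ ∨ e = e₂) ∧
    Iso (N.deleteVertex w) M

/-- The uncolored Henneberg move (H2), splitting an edge between `x` and `y`
and adding the new degree-three vertex `w`: `N` is obtained from `M` by
removing an edge joining `x` and `y` and adding the new vertex `w` together
with edges from `w` to `x`, `y` and some third vertex `z`. -/
def H2SplitAt (M N : UMG) (w x y : N.V) : Prop :=
  (∃ e₁ e₂ e₃ : N.E, e₁ ≠ e₂ ∧ e₁ ≠ e₃ ∧ e₂ ≠ e₃ ∧
      N.Betw e₁ x w ∧ N.Betw e₂ y w ∧ (∃ z, z ≠ w ∧ N.Betw e₃ z w) ∧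
      ∀ e, N.Incident e w → e = e₁ ∨ e = e₂ ∨ e = e₃) ∧
    ∃ (hx : x ≠ w) (hy : y ≠ w),
      Iso ((N.deleteVertex w).addEdge ⟨x, hx⟩ ⟨y, hy⟩) M

/-- The uncolored Henneberg move (H2). -/
def H2Rel (M N : UMG) : Prop :=
  ∃ w x y : N.V, H2SplitAt M N w x y

/-- `(2,2)`-spanning: the graph contains a spanning `(2,2)`-graph. -/
def Spanning22 (M : UMG) : Prop :=
  ∃ F : Set M.E, F.Finite ∧
    (∀ F' : Set M.E, F' ⊆ F → F'.Nonempty →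
      (F'.ncard : ℤ) ≤ 2 * (M.uverts F').ncard - 2) ∧
    (F.ncard : ℤ) = 2 * Nat.card M.V - 2

end UMG

namespace CMG

variable {Γ : Type} [AddCommGroup Γ]

/-- The symmetric lift of a `Γ`-colored graph: vertices `V × Γ`, and each
directed edge `ij` of color `γ` lifts to the edges `{ĩ_δ, j̃_{γ+δ}}`. -/
def liftU (G : CMG Γ) : UMG where
  V := G.V × Γ
  E := G.E × Γ
  fst := fun e => (G.src e.1, e.2)
  snd := fun e => (G.dst e.1, G.color e.1 + e.2)

/-- The lift of an edge set: the union of the fibers over its edges. -/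
def liftEdges (G : CMG Γ) (F : Set G.E) : Set (G.liftU).E :=
  {e | e.1 ∈ F}

/-- The concrete result of the colored Henneberg move (H1c) on `G`, adding a
new vertex `none` and two new edges `a → none`, `b → none` with colors
`γ₁`, `γ₂`. -/
def applyH1c (G : CMG Γ) (a b : G.V) (γ₁ γ₂ : Γ) : CMG Γ where
  V := Option G.V
  E := G.E ⊕ Bool
  finV := inferInstance
  finE := inferInstance
  src := Sum.elim (fun e => some (G.src e)) (fun x => some (cond x b a))
  dst := Sum.elim (fun e => some (G.dst e)) (fun _ => none)
  color := Sum.elim G.color (fun x => cond x γ₂ γ₁)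

/-- The concrete result of the colored Henneberg move (H2c) on `G`: the edge
`f` (from `a := src f` to `b := dst f`) is removed, a new vertex `none` is
added, and edges `a → none`, `b → none`, `c → none` with colors `γ₁`, `γ₂`,
`γ₃` are added. -/
def applyH2c (G : CMG Γ) (f : G.E) (c : G.V) (γ₁ γ₂ γ₃ : Γ) : CMG Γ where
  V := Option G.V
  E := {e : G.E // e ≠ f} ⊕ Fin 3
  finV := inferInstance
  finE := inferInstance
  src := Sum.elim (fun e => some (G.src e.1))
    (fun i => ![some (G.src f), some (G.dst f), some c] i)
  dst := Sum.elim (fun e => some (G.dst e.1)) (fun _ => none)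
  color := Sum.elim (fun e => G.color e.1) (fun i => ![γ₁, γ₂, γ₃] i)

/-- The intermediate uncolored graphs between the lift of `G` and the lift of
`applyH1c G a b γ₁ γ₂`: only the new vertices `ṽ_δ` with `δ ∈ S` (and their
incident edges) are present. -/
def h1cPartial (G : CMG Γ) (a b : G.V) (γ₁ γ₂ : Γ) (S : Set Γ) : UMG :=
  (CMG.liftU (G.applyH1c a b γ₁ γ₂)).induce {w | w.1 ≠ none ∨ w.2 ∈ S}

/-- The intermediate uncolored graphs between the lift of `G` and the lift of
`applyH2c G f c γ₁ γ₂ γ₃`: only the new vertices `ṽ_δ` with `δ ∈ S` (and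
their incident edges) are present, and for `δ ∉ S` the not-yet-split fiber
edge of `f` with endpoints `ã_{δ-γ₁}`, `b̃_{δ-γ₂}` is still present. -/
def h2cPartial (G : CMG Γ) (f : G.E) (c : G.V) (γ₁ γ₂ γ₃ : Γ) (S : Set Γ) :
    UMG :=
  UMG.addEdges
    ((CMG.liftU (G.applyH2c f c γ₁ γ₂ γ₃)).induce {w | w.1 ≠ none ∨ w.2 ∈ S})
    {δ : Γ // δ ∉ S}
    (fun δ => ⟨(some (G.src f), δ.1 - γ₁), Or.inl (by exact Option.some_ne_none _)⟩)
    (fun δ => ⟨(some (G.dst f), δ.1 - γ₂), Or.inl (by exact Option.some_ne_none _)⟩)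

end CMG

/-! ### Auxiliary development for the proof -/

namespace CMG

open CMG UMG

variable {Γ : Type} [AddCommGroup Γ]

section Walks

variable {G : CMG Γ} {F : Set G.E}

theorem Walk.append {u w x : G.V} {γ γ' : Γ} (h : G.Walk F u w γ)
    (h' : G.Walk F w x γ') : G.Walk F u x (γ + γ') := by
  induction h with
  | nil v => simpa using h'
  | fwd e he _ ih => rw [add_assoc]; exact CMG.Walk.fwd e he (ih h')
  | bwd e he _ ih => rw [add_assoc]; exact CMG.Walk.bwd e he (ih h')

theorem Walk.single_fwd {e : G.E} (he : e ∈ F) :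
    G.Walk F (G.src e) (G.dst e) (G.color e) := by
  simpa using CMG.Walk.fwd e he (CMG.Walk.nil (G.dst e))

theorem Walk.single_bwd {e : G.E} (he : e ∈ F) :
    G.Walk F (G.dst e) (G.src e) (-G.color e) := by
  simpa using CMG.Walk.bwd e he (CMG.Walk.nil (G.src e))

theorem Walk.reverse {u w : G.V} {γ : Γ} (h : G.Walk F u w γ) :
    G.Walk F w u (-γ) := by
  induction h with
  | nil v => simpa using CMG.Walk.nil v
  | fwd e he _ ih =>
      have := Walk.append ih (Walk.single_bwd he)
      rw [neg_add]
      simpa [add_comm] using this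
  | bwd e he _ ih =>
      have := Walk.append ih (Walk.single_fwd he)
      rw [neg_add, neg_neg]
      simpa [add_comm] using this

theorem Walk.mono {F' : Set G.E} (hFF : F ⊆ F') {u w : G.V} {γ : Γ}
    (h : G.Walk F u w γ) : G.Walk F' u w γ := by
  induction h with
  | nil v => exact CMG.Walk.nil v
  | fwd e he _ ih => exact CMG.Walk.fwd e (hFF he) ih
  | bwd e he _ ih => exact CMG.Walk.bwd e (hFF he) ih

theorem reaches_refl (v : G.V) : G.Reaches F v v := ⟨0, CMG.Walk.nil v⟩

theorem reaches_symm {u w : G.V} (h : G.Reaches F u w) : G.Reaches F w u := by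
  obtain ⟨γ, hγ⟩ := h; exact ⟨-γ, hγ.reverse⟩

theorem reaches_trans {u w x : G.V} (h : G.Reaches F u w)
    (h' : G.Reaches F w x) : G.Reaches F u x := by
  obtain ⟨γ, hγ⟩ := h; obtain ⟨γ', hγ'⟩ := h'; exact ⟨_, hγ.append hγ'⟩

theorem walk_endpoints {u w : G.V} {γ : Γ} (h : G.Walk F u w γ) :
    u = w ∨ (u ∈ G.vertsIn F ∧ w ∈ G.vertsIn F) := by
  induction h with
  | nil v => exact Or.inl rfl
  | fwd e he hw ih =>
      refine Or.inr ⟨⟨e, he, Or.inl rfl⟩, ?_⟩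
      rcases ih with h | h
      · exact h ▸ ⟨e, he, Or.inr rfl⟩
      · exact h.2
  | bwd e he hw ih =>
      refine Or.inr ⟨⟨e, he, Or.inr rfl⟩, ?_⟩
      rcases ih with h | h
      · exact h ▸ ⟨e, he, Or.inl rfl⟩
      · exact h.2

/-- The set of gains of closed walks at `v` is a subgroup. -/
def walkGains (G : CMG Γ) (F : Set G.E) (v : G.V) : AddSubgroup Γ where
  carrier := {γ | G.Walk F v v γ}
  zero_mem' := CMG.Walk.nil v
  add_mem' := fun h h' => Walk.append h h'
  neg_mem' := fun h => Walk.reverse h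

theorem gainGroup_eq_walkGains (G : CMG Γ) (F : Set G.E) (v : G.V) :
    G.gainGroup F v = walkGains G F v :=
  AddSubgroup.closure_eq (walkGains G F v)

theorem mem_gainGroup {v : G.V} {γ : Γ} :
    γ ∈ G.gainGroup F v ↔ G.Walk F v v γ := by
  rw [gainGroup_eq_walkGains]; rfl

theorem gainGroup_eq_of_reaches {u w : G.V} (h : G.Reaches F u w) :
    G.gainGroup F u = G.gainGroup F w := by
  obtain ⟨γ, hγ⟩ := h
  ext x
  simp only [mem_gainGroup]
  constructor
  · intro hx
    have := (hγ.reverse.append hx).append hγ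
    simpa [add_comm, add_assoc, add_left_comm] using this
  · intro hx
    have := (hγ.append hx).append hγ.reverse
    simpa [add_comm, add_assoc, add_left_comm] using this

theorem walk_gain_unique {v u w : G.V} (hbot : G.gainGroup F v = ⊥)
    (hv : G.Reaches F v u) {γ γ' : Γ}
    (h : G.Walk F u w γ) (h' : G.Walk F u w γ') : γ = γ' := by
  have hmem : γ + -γ' ∈ G.gainGroup F u := mem_gainGroup.2 (h.append h'.reverse)
  rw [← gainGroup_eq_of_reaches hv, hbot, AddSubgroup.mem_bot] at hmem
  have h0 : γ - γ' = 0 := by rwa [sub_eq_add_neg]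
  exact sub_eq_zero.mp h0

end Walks

end CMG

namespace CLProof

theorem subgroupRank_bot {Γ : Type} [AddCommGroup Γ] :
    subgroupRank (⊥ : AddSubgroup Γ) = 0 := by
  have : 0 ∈ {n | ∃ s : Finset Γ, s.card = n ∧
      AddSubgroup.closure (s : Set Γ) = (⊥ : AddSubgroup Γ)} :=
    ⟨∅, by simp⟩
  exact Nat.eq_zero_of_le_zero (Nat.sInf_le this)

variable {p : ℕ} [Fact p.Prime]

theorem rank_set_nonempty (H : AddSubgroup (ZMod p)) :
    {n | ∃ s : Finset (ZMod p), s.card = n ∧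
      AddSubgroup.closure (s : Set (ZMod p)) = H}.Nonempty := by
  haveI : NeZero p := ⟨(Fact.out : p.Prime).ne_zero⟩
  classical
  refine ⟨_, (H : Set (ZMod p)).toFinset, rfl, ?_⟩
  rw [Set.coe_toFinset]
  exact AddSubgroup.closure_eq H

theorem rank_eq_zero_iff (H : AddSubgroup (ZMod p)) :
    subgroupRank H = 0 ↔ H = ⊥ := by
  constructor
  · intro h
    have hmem := Nat.sInf_mem (rank_set_nonempty H)
    rw [subgroupRank] at h
    rw [h] at hmem
    obtain ⟨s, hs, hcl⟩ := hmem
    rw [Finset.card_eq_zero] at hs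
    subst hs
    simpa using hcl.symm
  · rintro rfl; exact subgroupRank_bot

theorem eq_top_of_ne_bot {H : AddSubgroup (ZMod p)} (h : H ≠ ⊥) : H = ⊤ := by
  obtain ⟨⟨x, hxH⟩, hx0⟩ := (AddSubgroup.ne_bot_iff_exists_ne_zero).1 h
  have hx0 : x ≠ 0 := fun hx => hx0 (Subtype.ext hx)
  haveI : NeZero p := ⟨(Fact.out : p.Prime).ne_zero⟩
  rw [eq_top_iff]
  intro y _
  have : y = ((y * x⁻¹).val) • x := by
    rw [nsmul_eq_mul, ZMod.natCast_val, ZMod.cast_id]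
    field_simp
  rw [this]
  exact AddSubgroup.nsmul_mem H hxH _

theorem rank_top : subgroupRank (⊤ : AddSubgroup (ZMod p)) = 1 := by
  have h1 : 1 ∈ {n | ∃ s : Finset (ZMod p), s.card = n ∧
      AddSubgroup.closure (s : Set (ZMod p)) = (⊤ : AddSubgroup (ZMod p))} := by
    refine ⟨{1}, Finset.card_singleton 1, ?_⟩
    haveI : NeZero p := ⟨(Fact.out : p.Prime).ne_zero⟩
    rw [eq_top_iff]
    intro y _
    have : y = (y.val) • (1 : ZMod p) := by
      rw [nsmul_eq_mul, mul_one, ZMod.natCast_val, ZMod.cast_id]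
    rw [this]
    refine AddSubgroup.nsmul_mem _ ?_ _
    apply AddSubgroup.subset_closure
    simp
  have hne : (⊤ : AddSubgroup (ZMod p)) ≠ ⊥ := by
    have : Nontrivial (ZMod p) := by
      haveI : Fact (1 < p) := ⟨(Fact.out : p.Prime).one_lt⟩
      infer_instance
    simpa using (AddSubgroup.bot_ne_top (G := ZMod p)).symm
  have h0 : subgroupRank (⊤ : AddSubgroup (ZMod p)) ≠ 0 := fun h =>
    hne ((rank_eq_zero_iff _).1 h)
  exact le_antisymm (Nat.sInf_le h1) (Nat.one_le_iff_ne_zero.2 h0)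

theorem rank_dichotomy (H : AddSubgroup (ZMod p)) :
    subgroupRank H = 0 ∨ subgroupRank H = 1 := by
  by_cases h : H = ⊥
  · exact Or.inl (by rw [h]; exact subgroupRank_bot)
  · exact Or.inr (by rw [eq_top_of_ne_bot h]; exact rank_top)

end CLProof

namespace CLProof

open CMG UMG

section UMGLemmas

variable {M : UMG}

theorem mem_uverts_fst {A : Set M.E} {e : M.E} (he : e ∈ A) :
    M.fst e ∈ M.uverts A := ⟨e, he, Or.inl rfl⟩

theorem mem_uverts_snd {A : Set M.E} {e : M.E} (he : e ∈ A) :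
    M.snd e ∈ M.uverts A := ⟨e, he, Or.inr rfl⟩

theorem mem_uverts_of_betw {A : Set M.E} {e : M.E} {a b : M.V} (he : e ∈ A)
    (hb : M.Betw e a b) : a ∈ M.uverts A ∧ b ∈ M.uverts A := by
  rcases hb with ⟨h1, h2⟩ | ⟨h1, h2⟩
  · exact ⟨h1 ▸ mem_uverts_fst he, h2 ▸ mem_uverts_snd he⟩
  · exact ⟨h2 ▸ mem_uverts_snd he, h1 ▸ mem_uverts_fst he⟩

theorem uverts_union (A B : Set M.E) :
    M.uverts (A ∪ B) = M.uverts A ∪ M.uverts B := by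
  ext v
  constructor
  · rintro ⟨e, (he | he), hinc⟩
    · exact Or.inl ⟨e, he, hinc⟩
    · exact Or.inr ⟨e, he, hinc⟩
  · rintro (⟨e, he, hinc⟩ | ⟨e, he, hinc⟩)
    · exact ⟨e, Or.inl he, hinc⟩
    · exact ⟨e, Or.inr he, hinc⟩

theorem uverts_mono {A B : Set M.E} (h : A ⊆ B) : M.uverts A ⊆ M.uverts B :=
  fun _ ⟨e, he, hinc⟩ => ⟨e, h he, hinc⟩

theorem umg_reaches_mono {A B : Set M.E} (h : A ⊆ B) {u w : M.V}
    (hr : M.Reaches A u w) : M.Reaches B u w :=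
  Relation.ReflTransGen.mono (p := fun u w => ∃ e ∈ B, M.Betw e u w)
    (fun _ _ ⟨e, he, hb⟩ => ⟨e, h he, hb⟩) _ _ hr

theorem reaches_of_incident {A : Set M.E} {e : M.E} (he : e ∈ A) {v : M.V}
    (hv : M.Incident e v) : M.Reaches A (M.fst e) v := by
  rcases hv with h | h
  · exact h ▸ Relation.ReflTransGen.refl
  · exact Relation.ReflTransGen.single ⟨e, he, Or.inl ⟨rfl, h⟩⟩

theorem umg_reaches_symm {A : Set M.E} {u w : M.V} (h : M.Reaches A u w) :
    M.Reaches A w u := by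
  induction h with
  | refl => exact Relation.ReflTransGen.refl
  | tail _ hstep ih =>
      obtain ⟨e, he, hb⟩ := hstep
      exact Relation.ReflTransGen.trans
        (Relation.ReflTransGen.single ⟨e, he, Or.symm hb⟩) ih

/-- Crossing lemma: a walk from inside `X` to outside `X` uses a boundary
edge. -/
theorem exists_crossing_edge {A : Set M.E} {X : Set M.V} {u w : M.V}
    (h : M.Reaches A u w) (hu : u ∈ X) (hw : w ∉ X) :
    ∃ (e : M.E) (a b : M.V), e ∈ A ∧ M.Betw e a b ∧ a ∈ X ∧ b ∉ X := by
  induction h with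
  | refl => exact absurd hu hw
  | @tail m b hum hstep ih =>
      obtain ⟨e, he, hb⟩ := hstep
      by_cases hm : m ∈ X
      · exact ⟨e, m, b, he, hb, hm, hw⟩
      · exact ih hm

end UMGLemmas

section NcardLemmas

theorem ncard_prod_univ {α β : Type*} [Finite β] (A : Set α) (hA : A.Finite) :
    (A ×ˢ (Set.univ : Set β)).ncard = Nat.card β * A.ncard := by
  rw [← Nat.card_coe_set_eq, ← Nat.card_coe_set_eq,
    Nat.card_congr (Equiv.Set.prod A Set.univ)]
  rw [Nat.card_prod, Nat.card_congr (Equiv.Set.univ β)]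
  ring

end NcardLemmas

section Lift

variable {Γ : Type} [AddCommGroup Γ] {G : CMG Γ}

theorem liftEdges_eq_prod (F : Set G.E) :
    G.liftEdges F = F ×ˢ (Set.univ : Set Γ) := by
  ext ⟨e, δ⟩
  exact ⟨fun h => ⟨h, trivial⟩, fun h => h.1⟩

theorem uverts_liftEdges (F : Set G.E) :
    (G.liftU).uverts (G.liftEdges F) = (G.vertsIn F) ×ˢ (Set.univ : Set Γ) := by
  ext ⟨v, δ⟩
  constructor
  · rintro ⟨⟨e, ρ⟩, he, hinc⟩
    rcases hinc with h | h
    · obtain ⟨h1, h2⟩ := Prod.ext_iff.1 h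
      exact ⟨h1 ▸ ⟨e, he, Or.inl rfl⟩, trivial⟩
    · obtain ⟨h1, h2⟩ := Prod.ext_iff.1 h
      exact ⟨h1 ▸ ⟨e, he, Or.inr rfl⟩, trivial⟩
  · rintro ⟨⟨e, he, hinc⟩, -⟩
    rcases hinc with h | h
    · exact ⟨(e, δ), he, Or.inl (by simp [CMG.liftU, h])⟩
    · exact ⟨(e, δ - G.color e), he, Or.inr (by simp [CMG.liftU, h])⟩

theorem ncard_liftEdges [Finite Γ] (F : Set G.E) (hF : F.Finite) :
    (G.liftEdges F).ncard = Nat.card Γ * F.ncard := by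
  rw [liftEdges_eq_prod]; exact ncard_prod_univ F hF

theorem ncard_uverts_liftEdges [Finite Γ] (F : Set G.E)
    (hF : (G.vertsIn F).Finite) :
    ((G.liftU).uverts (G.liftEdges F)).ncard = Nat.card Γ * (G.vertsIn F).ncard := by
  rw [uverts_liftEdges]; exact ncard_prod_univ _ hF

theorem lift_reaches_of_walk {F : Set G.E} {u w : G.V} {γ : Γ}
    (h : G.Walk F u w γ) (δ : Γ) :
    (G.liftU).Reaches (G.liftEdges F) (u, δ) (w, γ + δ) := by
  induction h generalizing δ with
  | nil v => rw [zero_add]; exact Relation.ReflTransGen.refl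
  | @fwd x γ' e he hw ih =>
      show (G.liftU).Reaches (G.liftEdges F) (G.src e, δ) (x, G.color e + γ' + δ)
      refine Relation.ReflTransGen.head
        (⟨(e, δ), he, Or.inl ⟨rfl, rfl⟩⟩ :
          ∃ ee ∈ G.liftEdges F, (G.liftU).Betw ee (G.src e, δ) (G.dst e, G.color e + δ)) ?_
      have := ih (G.color e + δ)
      have harith : γ' + (G.color e + δ) = G.color e + γ' + δ := by abel
      rwa [harith] at this
  | @bwd x γ' e he hw ih =>
      show (G.liftU).Reaches (G.liftEdges F) (G.dst e, δ) (x, -G.color e + γ' + δ)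
      have hbetw : (G.liftU).Betw (e, δ - G.color e) (G.dst e, δ) (G.src e, δ - G.color e) := by
        refine Or.inr ⟨rfl, ?_⟩
        show (G.dst e, G.color e + (δ - G.color e)) = (G.dst e, δ)
        rw [Prod.mk.injEq]
        exact ⟨rfl, by abel⟩
      refine Relation.ReflTransGen.head ⟨(e, δ - G.color e), he, hbetw⟩ ?_
      have := ih (δ - G.color e)
      have harith : γ' + (δ - G.color e) = -G.color e + γ' + δ := by abel
      rwa [harith] at this

theorem walk_of_lift_betw {F : Set G.E} {ee : (G.liftU).E} (he : ee ∈ G.liftEdges F)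
    {a b : (G.liftU).V} (hb : (G.liftU).Betw ee a b) :
    G.Walk F a.1 b.1 (b.2 - a.2) := by
  obtain ⟨e, ρ⟩ := ee
  rcases hb with ⟨h1, h2⟩ | ⟨h1, h2⟩
  · subst h1 h2
    show G.Walk F (G.src e) (G.dst e) (G.color e + ρ - ρ)
    rw [add_sub_cancel_right]
    exact Walk.single_fwd he
  · subst h1 h2
    show G.Walk F (G.dst e) (G.src e) (ρ - (G.color e + ρ))
    have harith : (ρ : Γ) - (G.color e + ρ) = -G.color e := by abel
    rw [harith]
    exact Walk.single_bwd he

theorem walk_of_lift_reaches {F : Set G.E} {a b : (G.liftU).V}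
    (h : (G.liftU).Reaches (G.liftEdges F) a b) :
    G.Walk F a.1 b.1 (b.2 - a.2) := by
  induction h with
  | refl => simpa using CMG.Walk.nil a.1
  | @tail m c _ hstep ih =>
      obtain ⟨e, he, hb⟩ := hstep
      have h2 := walk_of_lift_betw he hb
      have := Walk.append ih h2
      rwa [sub_add_sub_cancel'] at this

end Lift

end CLProof

namespace CLProof

open CMG

section Components

variable {Γ : Type} [AddCommGroup Γ] {G : CMG Γ} {F : Set G.E} {v : G.V}

/-- The edges of the connected component of `v` in `F`. -/
def compEdges (G : CMG Γ) (F : Set G.E) (v : G.V) : Set G.E :=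
  {e | e ∈ F ∧ G.src e ∈ G.comp F v}

theorem mem_comp_self : v ∈ G.comp F v := CMG.reaches_refl v

theorem comp_subset_vertsIn (hv : v ∈ G.vertsIn F) :
    G.comp F v ⊆ G.vertsIn F := by
  rintro w ⟨γ, hw⟩
  rcases CMG.walk_endpoints hw with rfl | h
  · exact hv
  · exact h.2

theorem dst_mem_comp {e : G.E} (he : e ∈ compEdges G F v) :
    G.dst e ∈ G.comp F v :=
  CMG.reaches_trans he.2 ⟨_, CMG.Walk.single_fwd he.1⟩

theorem mem_compEdges_of_dst {e : G.E} (he : e ∈ F)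
    (hd : G.dst e ∈ G.comp F v) : e ∈ compEdges G F v :=
  ⟨he, CMG.reaches_trans hd ⟨_, CMG.Walk.single_bwd he⟩⟩

theorem vertsIn_compEdges (hv : v ∈ G.vertsIn F) :
    G.vertsIn (compEdges G F v) = G.comp F v := by
  ext w
  constructor
  · rintro ⟨e, he, hinc⟩
    rcases hinc with h | h
    · exact h ▸ he.2
    · exact h ▸ dst_mem_comp he
  · intro hw
    obtain ⟨e, he, hinc⟩ := comp_subset_vertsIn hv hw
    rcases hinc with h | h
    · exact ⟨e, ⟨he, h ▸ hw⟩, Or.inl h⟩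
    · exact ⟨e, mem_compEdges_of_dst he (h ▸ hw), Or.inr h⟩

theorem walk_in_compEdges {u x : G.V} {γ : Γ} (hu : u ∈ G.comp F v)
    (h : G.Walk F u x γ) : G.Walk (compEdges G F v) u x γ := by
  induction h with
  | nil w => exact CMG.Walk.nil w
  | fwd e he hw ih =>
      exact CMG.Walk.fwd e ⟨he, hu⟩
        (ih (CMG.reaches_trans hu ⟨_, CMG.Walk.single_fwd he⟩))
  | bwd e he hw ih =>
      refine CMG.Walk.bwd e (mem_compEdges_of_dst he hu) ?_
      exact ih (CMG.reaches_trans hu ⟨_, CMG.Walk.single_bwd he⟩)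

theorem walk_avoid_compEdges {u x : G.V} {γ : Γ} (hu : u ∉ G.comp F v)
    (h : G.Walk F u x γ) : G.Walk (F \ compEdges G F v) u x γ := by
  induction h with
  | nil w => exact CMG.Walk.nil w
  | fwd e he hw ih =>
      have he' : e ∉ compEdges G F v := fun hc => hu hc.2
      have hdst : G.dst e ∉ G.comp F v := fun hc =>
        hu (mem_compEdges_of_dst he hc).2
      exact CMG.Walk.fwd e ⟨he, he'⟩ (ih hdst)
  | bwd e he hw ih =>
      have he' : e ∉ compEdges G F v := fun hc => hu (dst_mem_comp hc)
      have hsrc : G.src e ∉ G.comp F v := fun hc =>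
        hu (CMG.reaches_trans hc ⟨_, CMG.Walk.single_fwd he⟩)
      exact CMG.Walk.bwd e ⟨he, he'⟩ (ih hsrc)

theorem comp_eq_of_mem {w : G.V} (hw : w ∈ G.comp F v) :
    G.comp F w = G.comp F v := by
  ext x
  exact ⟨fun hx => CMG.reaches_trans hw hx,
    fun hx => CMG.reaches_trans (CMG.reaches_symm hw) hx⟩

theorem comp_compEdges_eq {w : G.V} (hw : w ∈ G.comp F v) :
    G.comp (compEdges G F v) w = G.comp F w := by
  ext x
  constructor
  · rintro ⟨γ, hγ⟩
    exact ⟨γ, hγ.mono (fun e he => he.1)⟩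
  · rintro ⟨γ, hγ⟩
    exact ⟨γ, walk_in_compEdges hw hγ⟩

theorem gainGroup_compEdges_eq {w : G.V} (hw : w ∈ G.comp F v) :
    G.gainGroup (compEdges G F v) w = G.gainGroup F w := by
  have : {γ | G.Walk (compEdges G F v) w w γ} = {γ | G.Walk F w w γ} := by
    ext γ
    exact ⟨fun h => h.mono (fun e he => he.1), fun h => walk_in_compEdges hw h⟩
  unfold CMG.gainGroup
  rw [this]

theorem comp_diff_eq {w : G.V} (hw : w ∉ G.comp F v) :
    G.comp (F \ compEdges G F v) w = G.comp F w := by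
  ext x
  constructor
  · rintro ⟨γ, hγ⟩
    exact ⟨γ, hγ.mono (fun e he => he.1)⟩
  · rintro ⟨γ, hγ⟩
    exact ⟨γ, walk_avoid_compEdges hw hγ⟩

theorem gainGroup_diff_eq {w : G.V} (hw : w ∉ G.comp F v) :
    G.gainGroup (F \ compEdges G F v) w = G.gainGroup F w := by
  have : {γ | G.Walk (F \ compEdges G F v) w w γ} = {γ | G.Walk F w w γ} := by
    ext γ
    exact ⟨fun h => h.mono (fun e he => he.1), fun h => walk_avoid_compEdges hw h⟩
  unfold CMG.gainGroup
  rw [this]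

theorem vertsIn_diff_compEdges (hv : v ∈ G.vertsIn F) :
    G.vertsIn (F \ compEdges G F v) = G.vertsIn F \ G.comp F v := by
  ext w
  constructor
  · rintro ⟨e, ⟨he, he'⟩, hinc⟩
    refine ⟨⟨e, he, hinc⟩, ?_⟩
    rcases hinc with h | h
    · exact fun hc => he' ⟨he, h ▸ hc⟩
    · exact fun hc => he' (mem_compEdges_of_dst he (h ▸ hc))
  · rintro ⟨⟨e, he, hinc⟩, hw⟩
    refine ⟨e, ⟨he, fun hc => ?_⟩, hinc⟩
    rcases hinc with h | h
    · exact hw (h ▸ hc.2)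
    · exact hw (h ▸ dst_mem_comp hc)

/-- Evaluation of `compCount` for a connected edge set. -/
theorem compCount_of_connected (hv : v ∈ G.vertsIn F)
    (hconn : ∀ w ∈ G.vertsIn F, G.Reaches F v w) (i : ℕ) :
    G.compCount F i =
      if subgroupRank (G.gainGroup F v) = i then 1 else 0 := by
  have hcomp : ∀ w ∈ G.vertsIn F, G.comp F w = G.comp F v := fun w hw =>
    comp_eq_of_mem (hconn w hw)
  have hgain : ∀ w ∈ G.vertsIn F, G.gainGroup F w = G.gainGroup F v :=
    fun w hw => (CMG.gainGroup_eq_of_reaches (hconn w hw)).symm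
  unfold CMG.compCount
  by_cases hr : subgroupRank (G.gainGroup F v) = i
  · rw [if_pos hr]
    have : {S : Set G.V | ∃ w ∈ G.vertsIn F, S = G.comp F w ∧
        subgroupRank (G.gainGroup F w) = i} = {G.comp F v} := by
      ext S
      constructor
      · rintro ⟨w, hw, rfl, -⟩
        simp [hcomp w hw]
      · rintro rfl
        exact ⟨v, hv, rfl, hr⟩
    rw [this, Set.ncard_singleton]
  · rw [if_neg hr]
    have : {S : Set G.V | ∃ w ∈ G.vertsIn F, S = G.comp F w ∧
        subgroupRank (G.gainGroup F w) = i} = ∅ := by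
      ext S
      simp only [Set.mem_setOf_eq, Set.mem_empty_iff_false, iff_false]
      rintro ⟨w, hw, rfl, hri⟩
      rw [hgain w hw] at hri
      exact hr hri
    rw [this, Set.ncard_empty]

theorem compCount_empty (i : ℕ) : G.compCount (∅ : Set G.E) i = 0 := by
  unfold CMG.compCount
  have : {S : Set G.V | ∃ w ∈ G.vertsIn (∅ : Set G.E), S = G.comp ∅ w ∧
      subgroupRank (G.gainGroup ∅ w) = i} = ∅ := by
    ext S
    simp only [Set.mem_setOf_eq, Set.mem_empty_iff_false, iff_false]
    rintro ⟨w, ⟨e, he, -⟩, -⟩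
    exact he
  rw [this, Set.ncard_empty]

theorem compCount_pos {w : G.V} (hw : w ∈ G.vertsIn F) :
    1 ≤ G.compCount F (subgroupRank (G.gainGroup F w)) := by
  have hmem : G.comp F w ∈ {S : Set G.V | ∃ u ∈ G.vertsIn F, S = G.comp F u ∧
      subgroupRank (G.gainGroup F u) = subgroupRank (G.gainGroup F w)} :=
    ⟨w, hw, rfl, rfl⟩
  have hfin : {S : Set G.V | ∃ u ∈ G.vertsIn F, S = G.comp F u ∧
      subgroupRank (G.gainGroup F u) = subgroupRank (G.gainGroup F w)}.Finite := by
    haveI : Finite G.V := G.finV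
    exact Set.toFinite _
  exact (Set.ncard_pos hfin).2 ⟨_, hmem⟩

/-- Splitting `compCount` along the component of `v`. -/
theorem compCount_split (hv : v ∈ G.vertsIn F) (i : ℕ) :
    G.compCount F i = G.compCount (compEdges G F v) i
      + G.compCount (F \ compEdges G F v) i := by
  haveI : Finite G.V := G.finV
  classical
  set F₁ := compEdges G F v
  set F₂ := F \ compEdges G F v
  have h1 : {S : Set G.V | ∃ w ∈ G.vertsIn F, S = G.comp F w ∧
        subgroupRank (G.gainGroup F w) = i}
      = {S : Set G.V | ∃ w ∈ G.vertsIn F₁, S = G.comp F₁ w ∧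
        subgroupRank (G.gainGroup F₁ w) = i}
      ∪ {S : Set G.V | ∃ w ∈ G.vertsIn F₂, S = G.comp F₂ w ∧
        subgroupRank (G.gainGroup F₂ w) = i} := by
    ext S
    constructor
    · rintro ⟨w, hw, rfl, hrk⟩
      by_cases hwc : w ∈ G.comp F v
      · refine Or.inl ⟨w, ?_, (comp_compEdges_eq hwc).symm, ?_⟩
        · rw [vertsIn_compEdges hv]; exact hwc
        · rw [gainGroup_compEdges_eq hwc]; exact hrk
      · refine Or.inr ⟨w, ?_, (comp_diff_eq hwc).symm, ?_⟩
        · rw [vertsIn_diff_compEdges hv]; exact ⟨hw, hwc⟩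
        · rw [gainGroup_diff_eq hwc]; exact hrk
    · rintro (⟨w, hw, rfl, hrk⟩ | ⟨w, hw, rfl, hrk⟩)
      · rw [vertsIn_compEdges hv] at hw
        exact ⟨w, comp_subset_vertsIn hv hw, (comp_compEdges_eq hw).symm ▸ rfl,
          by rw [← gainGroup_compEdges_eq hw]; exact hrk⟩
      · rw [vertsIn_diff_compEdges hv] at hw
        exact ⟨w, hw.1, (comp_diff_eq hw.2).symm ▸ rfl,
          by rw [← gainGroup_diff_eq hw.2]; exact hrk⟩
  have hdisj : Disjoint
      {S : Set G.V | ∃ w ∈ G.vertsIn F₁, S = G.comp F₁ w ∧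
        subgroupRank (G.gainGroup F₁ w) = i}
      {S : Set G.V | ∃ w ∈ G.vertsIn F₂, S = G.comp F₂ w ∧
        subgroupRank (G.gainGroup F₂ w) = i} := by
    rw [Set.disjoint_left]
    rintro S ⟨w, hw, rfl, -⟩ ⟨w', hw', hEq, -⟩
    rw [vertsIn_compEdges hv] at hw
    rw [vertsIn_diff_compEdges hv] at hw'
    have hww : w' ∈ G.comp F₁ w := by rw [hEq]; exact mem_comp_self
    rw [comp_compEdges_eq hw, comp_eq_of_mem hw] at hww
    exact hw'.2 hww
  unfold CMG.compCount
  rw [h1, Set.ncard_union_eq hdisj (Set.toFinite _) (Set.toFinite _)]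

end Components

end CLProof

namespace CLProof

open CMG UMG

section Backward

variable {p : ℕ} [hpF : Fact p.Prime] {G : CMG (ZMod p)}

omit hpF in
theorem vertsIn_empty : G.vertsIn (∅ : Set G.E) = ∅ := by
  ext w
  simp [CMG.vertsIn]

/-- Bound for a connected edge set with trivial gain group, assuming the
lift is Laman-sparse. -/
theorem bound_rank0 (hL : (G.liftU).LamanSparse) {F : Set G.E} {v : G.V}
    (hv : v ∈ G.vertsIn F) (hconn : ∀ w ∈ G.vertsIn F, G.Reaches F v w)
    (hbot : G.gainGroup F v = ⊥) (hne : F.Nonempty) :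
    (F.ncard : ℤ) ≤ 2 * (G.vertsIn F).ncard - 3 := by
  haveI : Finite G.E := G.finE
  haveI : Finite G.V := G.finV
  haveI : NeZero p := ⟨hpF.out.ne_zero⟩
  haveI : Finite (G.liftU).E := inferInstanceAs (Finite (G.E × ZMod p))
  haveI : Finite (G.liftU).V := inferInstanceAs (Finite (G.V × ZMod p))
  classical
  set pot : G.V → ZMod p := fun w =>
    if h : G.Reaches F v w then h.choose else 0 with hpotdef
  have hpot : ∀ w ∈ G.vertsIn F, G.Walk F v w (pot w) := by
    intro w hw
    have h := hconn w hw
    simp only [hpotdef, dif_pos h]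
    exact h.choose_spec
  have hsrc_mem : ∀ e ∈ F, G.src e ∈ G.vertsIn F :=
    fun e he => ⟨e, he, Or.inl rfl⟩
  have hdst_mem : ∀ e ∈ F, G.dst e ∈ G.vertsIn F :=
    fun e he => ⟨e, he, Or.inr rfl⟩
  have hcons : ∀ e ∈ F, pot (G.dst e) = pot (G.src e) + G.color e := by
    intro e he
    have w1 := hpot _ (hdst_mem e he)
    have w2 := (hpot _ (hsrc_mem e he)).append (Walk.single_fwd he)
    exact walk_gain_unique hbot (CMG.reaches_refl v) w1 w2
  set C : Set ((G.liftU).E) := (fun e => ((e, pot (G.src e)) : G.E × ZMod p)) '' F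
    with hCdef
  have hCne : C.Nonempty := hne.image _
  have hCm : C.ncard = F.ncard :=
    Set.ncard_image_of_injOn (fun a _ b _ h => congrArg Prod.fst h)
  have huv : (G.liftU).uverts C = (fun w => ((w, pot w) : G.V × ZMod p)) '' (G.vertsIn F) := by
    ext x
    constructor
    · rintro ⟨ee, ⟨e, he, rfl⟩, hinc⟩
      rcases hinc with h | h
      · exact ⟨G.src e, hsrc_mem e he, h⟩
      · refine ⟨G.dst e, hdst_mem e he, ?_⟩
        rw [← h]
        show (G.dst e, pot (G.dst e)) = (G.dst e, G.color e + pot (G.src e))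
        rw [hcons e he, add_comm]
    · rintro ⟨w, ⟨e, he, hinc⟩, rfl⟩
      rcases hinc with h | h
      · exact ⟨(e, pot (G.src e)), ⟨e, he, rfl⟩, Or.inl (by rw [← h]; rfl)⟩
      · refine ⟨(e, pot (G.src e)), ⟨e, he, rfl⟩, Or.inr ?_⟩
        show (G.dst e, G.color e + pot (G.src e)) = (w, pot w)
        rw [← h, hcons e he, add_comm]
  have hCn : ((G.liftU).uverts C).ncard = (G.vertsIn F).ncard := by
    rw [huv]
    exact Set.ncard_image_of_injOn (fun a _ b _ h => congrArg Prod.fst h)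
  have := hL C (Set.toFinite C) hCne
  rw [hCm, hCn] at this
  exact this

theorem bound_any (hL : (G.liftU).LamanSparse) {F : Set G.E} (hne : F.Nonempty) :
    (F.ncard : ℤ) ≤ 2 * (G.vertsIn F).ncard - 1 := by
  haveI : Finite G.E := G.finE
  haveI : Finite G.V := G.finV
  haveI : NeZero p := ⟨hpF.out.ne_zero⟩
  haveI : Finite (G.liftU).E := inferInstanceAs (Finite (G.E × ZMod p))
  haveI : Finite (G.liftU).V := inferInstanceAs (Finite (G.V × ZMod p))
  obtain ⟨e₀, he₀⟩ := hne
  have hne' : (G.liftEdges F).Nonempty := ⟨(e₀, 0), he₀⟩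
  have hlam := hL (G.liftEdges F) (Set.toFinite _) hne'
  rw [ncard_liftEdges F (Set.toFinite F),
    ncard_uverts_liftEdges F (Set.toFinite _), Nat.card_zmod] at hlam
  have hp1 : (1 : ℤ) ≤ (p : ℤ) := by exact_mod_cast hpF.out.one_lt.le
  by_contra hcon
  push_neg at hcon
  have h2 : 2 * ((G.vertsIn F).ncard : ℤ) ≤ (F.ncard : ℤ) := by linarith
  have h3 : (p : ℤ) * (2 * ((G.vertsIn F).ncard : ℤ)) ≤ (p : ℤ) * (F.ncard : ℤ) :=
    mul_le_mul_of_nonneg_left h2 (by linarith)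
  push_cast at hlam
  linarith

/-- The master lemma for the backward direction. -/
theorem coneLamanSparse_of_lift (hL : (G.liftU).LamanSparse) :
    G.IsConeLamanSparse := by
  haveI : Finite G.E := G.finE
  haveI : Finite G.V := G.finV
  have key : ∀ (n : ℕ) (F : Set G.E), F.ncard = n → G.ConeLamanCount F := by
    intro n
    induction n using Nat.strong_induction_on with
    | _ n ih =>
      intro F hFn
      rcases F.eq_empty_or_nonempty with rfl | ⟨e₀, he₀⟩
      · show ((∅ : Set G.E).ncard : ℤ) ≤ _
        rw [Set.ncard_empty, vertsIn_empty, Set.ncard_empty, compCount_empty,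
          compCount_empty, compCount_empty]
        norm_num
      · set v := G.src e₀ with hvdef
        have hv : v ∈ G.vertsIn F := ⟨e₀, he₀, Or.inl rfl⟩
        set F₁ := compEdges G F v with hF1def
        set F₂ := F \ F₁ with hF2def
        have hF1sub : F₁ ⊆ F := fun e he => he.1
        have he₀1 : e₀ ∈ F₁ := ⟨he₀, mem_comp_self⟩
        have hF2ss : F₂ ⊂ F := by
          constructor
          · exact Set.diff_subset
          · intro hsub
            exact (hsub he₀).2 he₀1
        have hlt : F₂.ncard < n := hFn ▸ Set.ncard_lt_ncard hF2ss (Set.toFinite F)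
        have hCL2 : G.ConeLamanCount F₂ := ih _ hlt F₂ rfl
        -- connectivity of F₁
        have hvF1 : v ∈ G.vertsIn F₁ := by
          rw [vertsIn_compEdges hv]; exact mem_comp_self
        have hconn1 : ∀ w ∈ G.vertsIn F₁, G.Reaches F₁ v w := by
          intro w hw
          rw [vertsIn_compEdges hv] at hw
          obtain ⟨γ, hγ⟩ := hw
          exact ⟨γ, walk_in_compEdges mem_comp_self hγ⟩
        have hne1 : F₁.Nonempty := ⟨e₀, he₀1⟩
        -- the bound and compCounts for F₁
        have hrank := rank_dichotomy (G.gainGroup F₁ v)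
        have hcc1 : ∀ i, G.compCount F₁ i =
            if subgroupRank (G.gainGroup F₁ v) = i then 1 else 0 :=
          fun i => compCount_of_connected hvF1 hconn1 i
        have hbound1 : (F₁.ncard : ℤ) ≤ 2 * (G.vertsIn F₁).ncard
            - 3 * G.compCount F₁ 0 - G.compCount F₁ 1 - G.compCount F₁ 2 := by
          rcases hrank with hr | hr
          · have hbot : G.gainGroup F₁ v = ⊥ := (rank_eq_zero_iff _).1 hr
            have := bound_rank0 hL hvF1 hconn1 hbot hne1
            rw [hcc1 0, hcc1 1, hcc1 2, hr]
            norm_num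
            linarith
          · have := bound_any hL hne1
            rw [hcc1 0, hcc1 1, hcc1 2, hr]
            norm_num
            linarith
        -- combine
        have hm : (F \ F₁).ncard + F₁.ncard = F.ncard :=
          Set.ncard_diff_add_ncard_of_subset hF1sub (Set.toFinite F)
        have hcompsub : G.comp F v ⊆ G.vertsIn F := comp_subset_vertsIn hv
        have hnV : (G.vertsIn F \ G.comp F v).ncard + (G.comp F v).ncard
            = (G.vertsIn F).ncard :=
          Set.ncard_diff_add_ncard_of_subset hcompsub (Set.toFinite _)
        have hV1 : (G.vertsIn F₁).ncard = (G.comp F v).ncard := by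
          rw [vertsIn_compEdges hv]
        have hV2 : (G.vertsIn F₂).ncard = (G.vertsIn F \ G.comp F v).ncard := by
          rw [hF2def, hF1def, vertsIn_diff_compEdges hv]
        have hsplit := fun i => compCount_split hv i
        show (F.ncard : ℤ) ≤ _
        rw [← hm]
        rw [hsplit 0, hsplit 1, hsplit 2]
        have hCL2' := hCL2
        show ((F \ F₁).ncard + F₁.ncard : ℤ) ≤
          2 * (G.vertsIn F).ncard
            - 3 * (G.compCount F₁ 0 + G.compCount F₂ 0)
            - (G.compCount F₁ 1 + G.compCount F₂ 1)
            - (G.compCount F₁ 2 + G.compCount F₂ 2)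
        have hCL2'' : (F₂.ncard : ℤ) ≤ 2 * (G.vertsIn F₂).ncard
            - 3 * G.compCount F₂ 0 - G.compCount F₂ 1 - G.compCount F₂ 2 := hCL2'
        rw [hV2] at hCL2''
        rw [hV1] at hbound1
        push_cast
        push_cast at hbound1 hCL2'' hnV
        linarith
  intro F
  exact key F.ncard F rfl

end Backward

end CLProof

namespace CLProof

open CMG UMG

section BackwardEq

variable {p : ℕ} [hpF : Fact p.Prime] {G : CMG (ZMod p)}

theorem compCountTop_eval {v : G.V}
    (hconn : ∀ w : G.V, G.Reaches Set.univ v w) (i : ℕ) :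
    G.compCountTop i =
      if subgroupRank (G.gainGroup Set.univ v) = i then 1 else 0 := by
  haveI : Finite G.V := G.finV
  have hcomp : ∀ w : G.V, G.comp Set.univ w = G.comp Set.univ v := fun w =>
    comp_eq_of_mem (hconn w)
  have hgain : ∀ w : G.V, G.gainGroup Set.univ w = G.gainGroup Set.univ v :=
    fun w => (CMG.gainGroup_eq_of_reaches (hconn w)).symm
  unfold CMG.compCountTop
  by_cases hr : subgroupRank (G.gainGroup Set.univ v) = i
  · rw [if_pos hr]
    have : {S : Set G.V | ∃ w : G.V, S = G.comp Set.univ w ∧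
        subgroupRank (G.gainGroup Set.univ w) = i} = {G.comp Set.univ v} := by
      ext S
      constructor
      · rintro ⟨w, rfl, -⟩
        simp [hcomp w]
      · rintro rfl
        exact ⟨v, rfl, hr⟩
    rw [this, Set.ncard_singleton]
  · rw [if_neg hr]
    have : {S : Set G.V | ∃ w : G.V, S = G.comp Set.univ w ∧
        subgroupRank (G.gainGroup Set.univ w) = i} = ∅ := by
      ext S
      simp only [Set.mem_setOf_eq, Set.mem_empty_iff_false, iff_false]
      rintro ⟨w, rfl, hri⟩
      rw [hgain w] at hri
      exact hr hri
    rw [this, Set.ncard_empty]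

theorem count_le_of_inhabited {F : Set G.E} {w : G.V} (hCL : G.ConeLamanCount F)
    (hw : w ∈ G.vertsIn F) :
    (F.ncard : ℤ) ≤ 2 * (G.vertsIn F).ncard - 1 := by
  have hpos := compCount_pos hw
  have h0 : (0:ℤ) ≤ G.compCount F 0 := Int.natCast_nonneg _
  have h1 : (0:ℤ) ≤ G.compCount F 1 := Int.natCast_nonneg _
  have h2 : (0:ℤ) ≤ G.compCount F 2 := Int.natCast_nonneg _
  have hCL' := hCL
  unfold CMG.ConeLamanCount at hCL'
  rcases rank_dichotomy (G.gainGroup F w) with hr | hr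
  · rw [hr] at hpos
    have hpos' : (1:ℤ) ≤ G.compCount F 0 := by exact_mod_cast hpos
    linarith
  · rw [hr] at hpos
    have hpos' : (1:ℤ) ≤ G.compCount F 1 := by exact_mod_cast hpos
    linarith

theorem isConeLaman_of_lift (hL : (G.liftU).LamanSparse)
    (hcard : (Nat.card G.E : ℤ) = 2 * Nat.card G.V - 1) :
    G.IsConeLaman := by
  haveI : Finite G.E := G.finE
  haveI : Finite G.V := G.finV
  have hsparse := coneLamanSparse_of_lift hL
  refine ⟨hsparse, ?_⟩
  have hEne : Nonempty G.E := by
    by_contra h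
    haveI : IsEmpty G.E := not_nonempty_iff.1 h
    rw [Nat.card_of_isEmpty] at hcard
    omega
  obtain ⟨e₀⟩ := hEne
  set v := G.src e₀ with hvdef
  have hv : v ∈ G.vertsIn Set.univ := ⟨e₀, trivial, Or.inl rfl⟩
  have hVle : ((G.vertsIn Set.univ).ncard : ℤ) ≤ Nat.card G.V := by
    have := Set.ncard_le_ncard (Set.subset_univ (G.vertsIn Set.univ))
      (Set.toFinite _)
    rw [Set.ncard_univ] at this
    exact_mod_cast this
  have hmuniv : ((Set.univ : Set G.E).ncard : ℤ) = Nat.card G.E := by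
    rw [Set.ncard_univ]
  -- Step A : only one component
  set F₁ := compEdges G Set.univ v with hF1def
  have hF2 : Set.univ \ F₁ = ∅ := by
    by_contra hne2
    obtain ⟨e, he⟩ := Set.nonempty_iff_ne_empty.2 hne2
    have hw2 : G.src e ∈ G.vertsIn (Set.univ \ F₁) := ⟨e, he, Or.inl rfl⟩
    have hv1 : v ∈ G.vertsIn F₁ := by
      rw [hF1def, vertsIn_compEdges hv]; exact mem_comp_self
    have hb1 := count_le_of_inhabited (hsparse F₁) hv1
    have hb2 := count_le_of_inhabited (hsparse (Set.univ \ F₁)) hw2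
    have hmm : ((Set.univ : Set G.E) \ F₁).ncard + F₁.ncard
        = (Set.univ : Set G.E).ncard :=
      Set.ncard_diff_add_ncard_of_subset (fun e he => he.1) (Set.toFinite _)
    have hV1 : (G.vertsIn F₁).ncard = (G.comp Set.univ v).ncard := by
      rw [hF1def, vertsIn_compEdges hv]
    have hV2 : (G.vertsIn (Set.univ \ F₁)).ncard
        = (G.vertsIn Set.univ \ G.comp Set.univ v).ncard := by
      rw [hF1def, vertsIn_diff_compEdges hv]
    have hnV : (G.vertsIn Set.univ \ G.comp Set.univ v).ncard
        + (G.comp Set.univ v).ncard = (G.vertsIn Set.univ).ncard :=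
      Set.ncard_diff_add_ncard_of_subset (comp_subset_vertsIn hv) (Set.toFinite _)
    rw [hV1] at hb1
    rw [hV2] at hb2
    have hmm' : (((Set.univ : Set G.E) \ F₁).ncard : ℤ) + F₁.ncard
        = Nat.card G.E := by rw [← hmuniv]; exact_mod_cast hmm
    have hnV' : ((G.vertsIn Set.univ \ G.comp Set.univ v).ncard : ℤ)
        + (G.comp Set.univ v).ncard = (G.vertsIn Set.univ).ncard := by
      exact_mod_cast hnV
    linarith
  have hF1univ : F₁ = Set.univ := by
    rw [Set.diff_eq_empty] at hF2
    exact le_antisymm (fun e he => trivial) hF2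
  have hvertscomp : G.vertsIn Set.univ = G.comp Set.univ v := by
    rw [← vertsIn_compEdges hv, ← hF1def, hF1univ]
  -- Step B : no isolated vertices
  have hVuniv : G.vertsIn Set.univ = Set.univ := by
    by_contra hne
    have hlt : (G.vertsIn Set.univ).ncard < Nat.card G.V := by
      rw [← Set.ncard_univ G.V]
      exact Set.ncard_lt_ncard ⟨Set.subset_univ _, fun h => hne
        (le_antisymm (Set.subset_univ _) h)⟩ (Set.toFinite _)
    have hb := count_le_of_inhabited (hsparse Set.univ) hv
    rw [hmuniv] at hb
    have hlt' : ((G.vertsIn Set.univ).ncard : ℤ) < Nat.card G.V := by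
      exact_mod_cast hlt
    linarith
  have hconn : ∀ w : G.V, G.Reaches Set.univ v w := by
    intro w
    have : w ∈ G.comp Set.univ v := by
      rw [← hvertscomp, hVuniv]; trivial
    exact this
  -- Step C : rank 1
  have hrank : subgroupRank (G.gainGroup Set.univ v) = 1 := by
    rcases rank_dichotomy (G.gainGroup Set.univ v) with hr | hr
    · exfalso
      have hbot := (rank_eq_zero_iff _).1 hr
      have hconn' : ∀ w ∈ G.vertsIn Set.univ, G.Reaches Set.univ v w :=
        fun w _ => hconn w
      have := bound_rank0 hL hv hconn' hbot ⟨e₀, trivial⟩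
      rw [hmuniv, hVuniv, Set.ncard_univ] at this
      omega
    · exact hr
  rw [compCountTop_eval hconn 0, compCountTop_eval hconn 1,
    compCountTop_eval hconn 2, hrank]
  norm_num
  linarith

end BackwardEq

end CLProof

namespace CLProof

open UMG

section MinViolation

variable {M : UMG}

theorem uverts_finite {C : Set M.E} (hC : C.Finite) : (M.uverts C).Finite := by
  refine Set.Finite.subset ((hC.image M.fst).union (hC.image M.snd)) ?_
  rintro x ⟨e, he, hinc⟩
  rcases hinc with h | h
  · exact Or.inl ⟨e, he, h⟩
  · exact Or.inr ⟨e, he, h⟩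

theorem exists_min_violation {F : Set M.E} (h : M.ViolatesLaman F) :
    ∃ C, C ⊆ F ∧ M.ViolatesLaman C ∧ ∀ D, D ⊂ C → ¬ M.ViolatesLaman D := by
  have key : ∀ (n : ℕ) (F : Set M.E), F.ncard = n → M.ViolatesLaman F →
      ∃ C, C ⊆ F ∧ M.ViolatesLaman C ∧ ∀ D, D ⊂ C → ¬ M.ViolatesLaman D := by
    intro n
    induction n using Nat.strong_induction_on with
    | _ n ih =>
      intro F hFn hF
      by_cases hex : ∃ D, D ⊂ F ∧ M.ViolatesLaman D
      · obtain ⟨D, hDF, hD⟩ := hex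
        have hlt : D.ncard < n := hFn ▸ Set.ncard_lt_ncard hDF hF.1
        obtain ⟨C, hCD, hC⟩ := ih _ hlt D rfl hD
        exact ⟨C, hCD.trans hDF.1, hC⟩
      · push_neg at hex
        exact ⟨F, subset_rfl, hF, hex⟩
  exact key F.ncard F rfl h

theorem min_violation_connected {C : Set M.E} (hC : M.ViolatesLaman C)
    (hmin : ∀ D, D ⊂ C → ¬ M.ViolatesLaman D) : M.ConnectedOn C := by
  obtain ⟨hfin, hne, hviol⟩ := hC
  intro u hu w hw
  by_contra hnr
  set X : Set M.V := {x | M.Reaches C u x} with hXdef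
  set C1 : Set M.E := {e | e ∈ C ∧ M.fst e ∈ X} with hC1def
  set C2 : Set M.E := C \ C1 with hC2def
  have hC1sub : C1 ⊆ C := fun e he => he.1
  have hXsnd : ∀ e ∈ C1, M.snd e ∈ X := by
    rintro e ⟨heC, hfst⟩
    exact Relation.ReflTransGen.tail hfst ⟨e, heC, Or.inl ⟨rfl, rfl⟩⟩
  have hC1_of_inc : ∀ e ∈ C, ∀ x ∈ X, M.Incident e x → e ∈ C1 := by
    intro e he x hx hinc
    rcases hinc with h | h
    · exact ⟨he, h ▸ hx⟩
    · exact ⟨he, Relation.ReflTransGen.tail hx ⟨e, he, Or.inr ⟨rfl, h⟩⟩⟩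
  have hmemX : ∀ x ∈ M.uverts C1, x ∈ X := by
    rintro x ⟨e, he, hinc⟩
    rcases hinc with h | h
    · exact h ▸ he.2
    · exact h ▸ hXsnd e he
  obtain ⟨eu, heu, hincu⟩ := hu
  have heu1 : eu ∈ C1 := hC1_of_inc eu heu u Relation.ReflTransGen.refl hincu
  obtain ⟨ew, hew, hincw⟩ := hw
  have hew2 : ew ∈ C2 := by
    refine ⟨hew, fun hew1 => ?_⟩
    have : w ∈ X := by
      rcases hincw with h | h
      · exact h ▸ hew1.2
      · exact h ▸ hXsnd ew hew1
    exact hnr this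
  have hdisjV : M.uverts C1 ∩ M.uverts C2 = ∅ := by
    ext x
    simp only [Set.mem_inter_iff, Set.mem_empty_iff_false, iff_false, not_and]
    rintro hx1 ⟨e, he, hinc⟩
    exact he.2 (hC1_of_inc e he.1 x (hmemX x hx1) hinc)
  have hC1ne : C1.Nonempty := ⟨eu, heu1⟩
  have hC2ne : C2.Nonempty := ⟨ew, hew2⟩
  have hC1ss : C1 ⊂ C := ⟨hC1sub, fun hsub => hew2.2 (hsub hew)⟩
  have hC2ss : C2 ⊂ C := ⟨Set.diff_subset, fun hsub => (hsub heu).2 heu1⟩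
  have hcount1 : (C1.ncard : ℤ) ≤ 2 * (M.uverts C1).ncard - 3 := by
    by_contra hcon
    exact hmin C1 hC1ss ⟨hfin.subset hC1sub, hC1ne, hcon⟩
  have hcount2 : (C2.ncard : ℤ) ≤ 2 * (M.uverts C2).ncard - 3 := by
    by_contra hcon
    exact hmin C2 hC2ss ⟨hfin.subset Set.diff_subset, hC2ne, hcon⟩
  have hm : C2.ncard + C1.ncard = C.ncard :=
    Set.ncard_diff_add_ncard_of_subset hC1sub hfin
  have huv : M.uverts C = M.uverts C1 ∪ M.uverts C2 := by
    rw [← uverts_union]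
    congr 1
    rw [Set.union_diff_cancel hC1sub]
  have hn : (M.uverts C).ncard = (M.uverts C1).ncard + (M.uverts C2).ncard := by
    rw [huv, Set.ncard_union_eq (Set.disjoint_iff_inter_eq_empty.2 hdisjV)
      (uverts_finite (hfin.subset hC1sub)) (uverts_finite (hfin.subset Set.diff_subset))]
  apply hviol
  have hm' : (C2.ncard : ℤ) + C1.ncard = C.ncard := by exact_mod_cast hm
  have hn' : ((M.uverts C).ncard : ℤ)
      = (M.uverts C1).ncard + (M.uverts C2).ncard := by exact_mod_cast hn
  linarith

end MinViolation

end CLProof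

namespace CLProof

open CMG UMG

section Shift

variable {Γ : Type} [AddCommGroup Γ] {G : CMG Γ}

/-- Translate a set of lift edges by `δ`. -/
def shAdd (G : CMG Γ) (δ : Γ) (A : Set (G.liftU).E) : Set (G.liftU).E :=
  (fun x : G.E × Γ => (x.1, x.2 + δ)) '' A

theorem shAdd_zero (A : Set (G.liftU).E) : shAdd G 0 A = A := by
  unfold shAdd
  simp
  exact Set.image_id A

theorem shAdd_shAdd (δ δ' : Γ) (A : Set (G.liftU).E) :
    shAdd G δ (shAdd G δ' A) = shAdd G (δ' + δ) A := by
  unfold shAdd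
  refine (Set.image_image _ _ A).trans ?_
  apply Set.image_congr
  intro x _
  show (x.1, x.2 + δ' + δ) = (x.1, x.2 + (δ' + δ))
  rw [add_assoc]

theorem shAdd_subset_liftEdges {F : Set G.E} {A : Set (G.liftU).E}
    (h : A ⊆ G.liftEdges F) (δ : Γ) : shAdd G δ A ⊆ G.liftEdges F := by
  rintro x ⟨y, hy, rfl⟩
  show (y.1 : G.E) ∈ F
  exact h hy

theorem shAdd_mono {A B : Set (G.liftU).E} (h : A ⊆ B) (δ : Γ) :
    shAdd G δ A ⊆ shAdd G δ B := Set.image_mono h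

theorem shMap_injective (δ : Γ) :
    Function.Injective (fun x : G.E × Γ => (x.1, x.2 + δ)) := by
  rintro ⟨e, β⟩ ⟨e', β'⟩ h
  obtain ⟨h1, h2⟩ := Prod.ext_iff.1 h
  exact Prod.ext h1 (by exact add_right_cancel h2)

theorem ncard_shAdd (δ : Γ) (A : Set (G.liftU).E) :
    (shAdd G δ A).ncard = A.ncard :=
  Set.ncard_image_of_injective A (shMap_injective δ)

theorem uverts_shAdd (δ : Γ) (A : Set (G.liftU).E) :
    (G.liftU).uverts (shAdd G δ A)
      = (fun x : G.V × Γ => (x.1, x.2 + δ)) '' ((G.liftU).uverts A) := by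
  ext x
  constructor
  · rintro ⟨ee', ⟨ee, hA, rfl⟩, hinc⟩
    rcases hinc with h | h
    · refine ⟨(G.liftU).fst ee, mem_uverts_fst hA, ?_⟩
      rw [← h]; rfl
    · refine ⟨(G.liftU).snd ee, mem_uverts_snd hA, ?_⟩
      rw [← h]
      show ((G.dst ee.1, G.color ee.1 + ee.2 + δ) : G.V × Γ)
        = (G.dst ee.1, G.color ee.1 + (ee.2 + δ))
      rw [add_assoc]
  · rintro ⟨y, ⟨ee, hA, hinc⟩, rfl⟩
    rcases hinc with h | h
    · refine ⟨(ee.1, ee.2 + δ), ⟨ee, hA, rfl⟩, Or.inl ?_⟩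
      rw [← h]; rfl
    · refine ⟨(ee.1, ee.2 + δ), ⟨ee, hA, rfl⟩, Or.inr ?_⟩
      rw [← h]
      show ((G.dst ee.1, G.color ee.1 + (ee.2 + δ)) : G.V × Γ)
        = (G.dst ee.1, G.color ee.1 + ee.2 + δ)
      rw [add_assoc]

theorem ncard_uverts_shAdd (δ : Γ) (A : Set (G.liftU).E) :
    ((G.liftU).uverts (shAdd G δ A)).ncard = ((G.liftU).uverts A).ncard := by
  rw [uverts_shAdd]
  refine Set.ncard_image_of_injOn (Set.injOn_of_injective ?_)
  rintro ⟨v, β⟩ ⟨v', β'⟩ h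
  obtain ⟨h1, h2⟩ := Prod.ext_iff.1 h
  exact Prod.ext h1 (by exact add_right_cancel h2)

/-- Transfer of the Laman count to proper nonempty subsets of a translate of
a minimal violation. -/
theorem shift_count [Finite G.E] [Finite Γ] {C : Set (G.liftU).E}
    (hmin : ∀ D, D ⊂ C → ¬ (G.liftU).ViolatesLaman D) (δ : Γ)
    {I : Set (G.liftU).E} (hI : I ⊆ shAdd G δ C) (hIne : I.Nonempty)
    (hIne2 : I ≠ shAdd G δ C) :
    (I.ncard : ℤ) ≤ 2 * ((G.liftU).uverts I).ncard - 3 := by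
  haveI : Finite (G.liftU).E := inferInstanceAs (Finite (G.E × Γ))
  set I' := shAdd G (-δ) I with hI'def
  have hsub : I' ⊆ C := by
    have := shAdd_mono hI (-δ)
    rwa [shAdd_shAdd, add_neg_cancel, shAdd_zero] at this
  have hne : I' ≠ C := by
    intro hEq
    apply hIne2
    have : shAdd G δ I' = shAdd G δ C := by rw [hEq]
    rwa [hI'def, shAdd_shAdd, neg_add_cancel, shAdd_zero] at this
  have hI'ne : I'.Nonempty := hIne.image _
  have hcount : (I'.ncard : ℤ) ≤ 2 * ((G.liftU).uverts I').ncard - 3 := by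
    by_contra hcon
    exact hmin I' ⟨hsub, fun hcs => hne (le_antisymm hsub hcs)⟩
      ⟨Set.toFinite _, hI'ne, hcon⟩
  rwa [hI'def, ncard_shAdd, ncard_uverts_shAdd] at hcount

end Shift

end CLProof

namespace CLProof

open CMG UMG

section Forward

variable {p : ℕ} [hpF : Fact p.Prime] {G : CMG (ZMod p)}

theorem lift_lamanSparse_of_cone (hp3 : 3 ≤ p)
    (hsp : G.IsConeLamanSparse) : (G.liftU).LamanSparse := by
  haveI : Finite G.E := G.finE
  haveI : Finite G.V := G.finV
  haveI : NeZero p := ⟨hpF.out.ne_zero⟩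
  haveI : Finite (G.liftU).E := inferInstanceAs (Finite (G.E × ZMod p))
  haveI : Finite (G.liftU).V := inferInstanceAs (Finite (G.V × ZMod p))
  by_contra hcon
  unfold UMG.LamanSparse UMG.Sparse at hcon
  push_neg at hcon
  obtain ⟨F₀, hfin0, hne0, hviol0⟩ := hcon
  obtain ⟨C, -, hC, hmin⟩ := exists_min_violation
    (M := G.liftU) ⟨hfin0, hne0, not_le.2 hviol0⟩
  have hconnC := min_violation_connected hC hmin
  obtain ⟨hCfin, hCne, hCviol⟩ := hC
  have hCdef : 2 * (((G.liftU).uverts C).ncard : ℤ) ≤ (C.ncard : ℤ) + 2 := by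
    have := not_le.1 hCviol
    linarith
  set F : Set G.E := Prod.fst '' C with hFdef
  have hFne : F.Nonempty := hCne.image _
  have hCsub : C ⊆ G.liftEdges F := by
    intro x hx
    show x.1 ∈ F
    exact ⟨x, hx, rfl⟩
  have hprojV : ∀ x ∈ (G.liftU).uverts C, x.1 ∈ G.vertsIn F := by
    rintro x ⟨ee, hee, hinc⟩
    have heF : ee.1 ∈ F := ⟨ee, hee, rfl⟩
    rcases hinc with h | h
    · exact ⟨ee.1, heF, Or.inl (by rw [← h]; rfl)⟩
    · exact ⟨ee.1, heF, Or.inr (by rw [← h]; rfl)⟩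
  have hliftV : ∀ u ∈ G.vertsIn F, ∃ x ∈ (G.liftU).uverts C, x.1 = u := by
    rintro u ⟨e, ⟨ee, hee, rfl⟩, hinc⟩
    rcases hinc with h | h
    · exact ⟨(G.liftU).fst ee, mem_uverts_fst hee, h⟩
    · exact ⟨(G.liftU).snd ee, mem_uverts_snd hee, h⟩
  have hFconn : ∀ u ∈ G.vertsIn F, ∀ w ∈ G.vertsIn F, G.Reaches F u w := by
    intro u hu w hw
    obtain ⟨x, hx, hx1⟩ := hliftV u hu
    obtain ⟨y, hy, hy1⟩ := hliftV w hw
    have hr := hconnC x hx y hy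
    have hr' := umg_reaches_mono hCsub hr
    have hw' := walk_of_lift_reaches hr'
    rw [hx1, hy1] at hw'
    exact ⟨_, hw'⟩
  obtain ⟨eF, heF⟩ := hFne
  set u₀ : G.V := G.src eF with hu₀def
  have hu₀ : u₀ ∈ G.vertsIn F := ⟨eF, heF, Or.inl rfl⟩
  have hcc : ∀ i, G.compCount F i =
      if subgroupRank (G.gainGroup F u₀) = i then 1 else 0 :=
    fun i => compCount_of_connected hu₀ (hFconn u₀ hu₀) i
  have hCLF := hsp F
  unfold CMG.ConeLamanCount at hCLF
  rcases rank_dichotomy (G.gainGroup F u₀) with hr0 | hr1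
  · -- rank 0 : the violation projects to a violation in G
    have hbot := (rank_eq_zero_iff _).1 hr0
    have hvinj : ∀ x ∈ (G.liftU).uverts C, ∀ y ∈ (G.liftU).uverts C,
        x.1 = y.1 → x = y := by
      intro x hx y hy hxy
      have hr := umg_reaches_mono hCsub (hconnC x hx y hy)
      have hw := walk_of_lift_reaches hr
      rw [hxy] at hw
      have hmem : y.2 - x.2 ∈ G.gainGroup F y.1 := mem_gainGroup.2 hw
      rw [← gainGroup_eq_of_reaches (hFconn u₀ hu₀ y.1 (hxy ▸ hprojV x hx)),
        hbot, AddSubgroup.mem_bot, sub_eq_zero] at hmem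
      exact Prod.ext hxy hmem.symm
    have hmF : F.ncard = C.ncard := by
      refine Set.ncard_image_of_injOn ?_
      intro a ha b hb hab
      have h1 := mem_uverts_fst (M := G.liftU) ha
      have h2 := mem_uverts_fst (M := G.liftU) hb
      have : (G.liftU).fst a = (G.liftU).fst b := by
        refine hvinj _ h1 _ h2 ?_
        show G.src a.1 = G.src b.1
        rw [hab]
      have h2' := Prod.ext_iff.1 this
      exact Prod.ext hab h2'.2
    have hvF : G.vertsIn F = Prod.fst '' ((G.liftU).uverts C) := by
      ext u
      constructor
      · intro hu
        obtain ⟨x, hx, hx1⟩ := hliftV u hu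
        exact ⟨x, hx, hx1⟩
      · rintro ⟨x, hx, rfl⟩
        exact hprojV x hx
    have hnF : (G.vertsIn F).ncard = ((G.liftU).uverts C).ncard := by
      rw [hvF]
      exact Set.ncard_image_of_injOn (fun a ha b hb h => hvinj a ha b hb h)
    rw [hcc 0, hcc 1, hcc 2, hr0] at hCLF
    norm_num at hCLF
    rw [hmF, hnF] at hCLF
    exact hCviol (by linarith)
  · -- rank 1 : the chain argument
    have htop : G.gainGroup F u₀ = ⊤ := by
      refine eq_top_of_ne_bot fun hb => ?_
      rw [hb, subgroupRank_bot] at hr1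
      omega
    -- connectivity of the full lift of F
    have hLC : ∀ a ∈ (G.liftU).uverts (G.liftEdges F),
        ∀ b ∈ (G.liftU).uverts (G.liftEdges F),
        (G.liftU).Reaches (G.liftEdges F) a b := by
      intro a ha b hb
      rw [uverts_liftEdges] at ha hb
      obtain ⟨γ, hwab⟩ := hFconn a.1 ha.1 b.1 hb.1
      have r1 := lift_reaches_of_walk hwab a.2
      have hmem : b.2 - (γ + a.2) ∈ G.gainGroup F b.1 := by
        rw [← gainGroup_eq_of_reaches (hFconn u₀ hu₀ b.1 hb.1), htop]
        trivial
      have hwb := mem_gainGroup.1 hmem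
      have r2 := lift_reaches_of_walk hwb (γ + a.2)
      have harith : b.2 - (γ + a.2) + (γ + a.2) = b.2 := by abel
      rw [harith] at r2
      have := Relation.ReflTransGen.trans r1 r2
      exact this
    -- the chain construction
    have main : ∀ k : ℕ, ∃ T : Finset (ZMod p), T.Nonempty ∧
        2 * ((((G.liftU).uverts (⋃ δ ∈ T, shAdd G δ C)).ncard : ℤ))
          ≤ ((⋃ δ ∈ T, shAdd G δ C).ncard : ℤ) + 2 ∧
        ((⋃ δ ∈ T, shAdd G δ C) = G.liftEdges F ∨ k ≤ T.card) := by
      intro k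
      induction k with
      | zero =>
          refine ⟨{0}, Finset.singleton_nonempty 0, ?_, Or.inr (Nat.zero_le _)⟩
          rw [Finset.set_biUnion_singleton, shAdd_zero]
          exact hCdef
      | succ k ih =>
          obtain ⟨T, hTne, hdef, hor⟩ := ih
          set U : Set (G.liftU).E := ⋃ δ ∈ T, shAdd G δ C with hUdef
          by_cases hUF : U = G.liftEdges F
          · exact ⟨T, hTne, hdef, Or.inl hUF⟩
          have hkT : k ≤ T.card := hor.resolve_left hUF
          have hUsub : U ⊆ G.liftEdges F :=
            Set.iUnion₂_subset fun δ _ => shAdd_subset_liftEdges hCsub δ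
          have hexd : ∃ δ, ¬ shAdd G δ C ⊆ U ∧
              (((G.liftU).uverts (shAdd G δ C)) ∩ ((G.liftU).uverts U)).Nonempty := by
            by_contra hno
            push_neg at hno
            have hno' := hno
            have hUss : U ⊂ G.liftEdges F :=
              ⟨hUsub, fun h => hUF (le_antisymm hUsub h)⟩
            obtain ⟨x, hxF, hxU⟩ := Set.exists_of_ssubset hUss
            have hx1F : x.1 ∈ F := hxF
            obtain ⟨c₀, hc₀, hc₀1⟩ := hx1F
            have hxD : x ∈ shAdd G (x.2 - c₀.2) C := by
              refine ⟨c₀, hc₀, ?_⟩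
              show (c₀.1, c₀.2 + (x.2 - c₀.2)) = x
              exact Prod.ext hc₀1 (by ring)
            have hDnsub : ¬ shAdd G (x.2 - c₀.2) C ⊆ U := fun h => hxU (h hxD)
            -- a vertex of U and a vertex outside of `uverts U`
            obtain ⟨δ₀, hδ₀⟩ := hTne
            obtain ⟨cc, hcc0⟩ := hCne
            have hccU : ((cc.1, cc.2 + δ₀) : G.E × ZMod p) ∈ U :=
              Set.mem_iUnion₂.2 ⟨δ₀, hδ₀, ⟨cc, hcc0, rfl⟩⟩
            have huuU : (G.liftU).fst (cc.1, cc.2 + δ₀) ∈ (G.liftU).uverts U :=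
              mem_uverts_fst hccU
            have huuF : (G.liftU).fst (cc.1, cc.2 + δ₀)
                ∈ (G.liftU).uverts (G.liftEdges F) := uverts_mono hUsub huuU
            have hvvD : (G.liftU).fst x ∈ (G.liftU).uverts (shAdd G (x.2 - c₀.2) C) :=
              mem_uverts_fst hxD
            have hvvF : (G.liftU).fst x ∈ (G.liftU).uverts (G.liftEdges F) :=
              mem_uverts_fst hxF
            have hvvU : (G.liftU).fst x ∉ (G.liftU).uverts U := by
              intro hmem
              have : (G.liftU).fst x ∈ ((G.liftU).uverts (shAdd G (x.2 - c₀.2) C))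
                  ∩ ((G.liftU).uverts U) := ⟨hvvD, hmem⟩
              rw [hno' _ hDnsub] at this
              exact this
            obtain ⟨g, a, b, hgF, hbtw, haX, hbX⟩ :=
              exists_crossing_edge (hLC _ huuF _ hvvF) huuU hvvU
            have hg1F : g.1 ∈ F := hgF
            obtain ⟨c₁, hc₁, hc₁1⟩ := hg1F
            have hgD : g ∈ shAdd G (g.2 - c₁.2) C := by
              refine ⟨c₁, hc₁, ?_⟩
              show (c₁.1, c₁.2 + (g.2 - c₁.2)) = g
              exact Prod.ext hc₁1 (by ring)
            by_cases hgsub : shAdd G (g.2 - c₁.2) C ⊆ U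
            · have hb' := (mem_uverts_of_betw hgD hbtw).2
              exact hbX (uverts_mono hgsub hb')
            · have ha' := (mem_uverts_of_betw hgD hbtw).1
              have : a ∈ ((G.liftU).uverts (shAdd G (g.2 - c₁.2) C))
                  ∩ ((G.liftU).uverts U) := ⟨ha', haX⟩
              rw [hno' _ hgsub] at this
              exact this
          obtain ⟨δs, hnsub, htouch⟩ := hexd
          have hδsT : δs ∉ T := fun h =>
            hnsub (fun x hx => Set.mem_iUnion₂.2 ⟨δs, h, hx⟩)
          refine ⟨insert δs T, Finset.insert_nonempty _ _, ?_, Or.inr ?_⟩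
          swap
          · rw [Finset.card_insert_of_notMem hδsT]
            omega
          set D : Set (G.liftU).E := shAdd G δs C with hDdef
          have hUD : (⋃ δ ∈ insert δs T, shAdd G δ C) = D ∪ U := by
            rw [Finset.set_biUnion_insert]
          rw [hUD]
          have hmUD : (D ∪ U).ncard + (D ∩ U).ncard = D.ncard + U.ncard :=
            Set.ncard_union_add_ncard_inter D U (Set.toFinite _) (Set.toFinite _)
          have huvUD : (G.liftU).uverts (D ∪ U)
              = (G.liftU).uverts D ∪ (G.liftU).uverts U := uverts_union D U
          have hnUD : ((G.liftU).uverts D ∪ (G.liftU).uverts U).ncard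
              + ((G.liftU).uverts D ∩ (G.liftU).uverts U).ncard
              = ((G.liftU).uverts D).ncard + ((G.liftU).uverts U).ncard :=
            Set.ncard_union_add_ncard_inter _ _ (Set.toFinite _) (Set.toFinite _)
          have hDm : D.ncard = C.ncard := ncard_shAdd δs C
          have hDn : ((G.liftU).uverts D).ncard = ((G.liftU).uverts C).ncard :=
            ncard_uverts_shAdd δs C
          have htouch1 : 1 ≤ (((G.liftU).uverts D) ∩ ((G.liftU).uverts U)).ncard :=
            (Set.ncard_pos (Set.toFinite _)).2 htouch
          have hmUD' : ((D ∪ U).ncard : ℤ) + ((D ∩ U).ncard : ℤ)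
              = (D.ncard : ℤ) + (U.ncard : ℤ) := by exact_mod_cast hmUD
          have hnUD' : (((G.liftU).uverts D ∪ (G.liftU).uverts U).ncard : ℤ)
              + (((G.liftU).uverts D ∩ (G.liftU).uverts U).ncard : ℤ)
              = (((G.liftU).uverts D).ncard : ℤ)
                + (((G.liftU).uverts U).ncard : ℤ) := by exact_mod_cast hnUD
          have htouch1' : (1 : ℤ)
              ≤ (((G.liftU).uverts D) ∩ ((G.liftU).uverts U)).ncard := by
            exact_mod_cast htouch1
          rw [huvUD]
          rcases Set.eq_empty_or_nonempty (D ∩ U) with hIemp | hIne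
          · rw [hIemp, Set.ncard_empty] at hmUD'
            push_cast at hmUD'
            rw [hDm] at hmUD'
            rw [hDn] at hnUD'
            linarith
          · have hIneD : D ∩ U ≠ D := by
              obtain ⟨d, hd⟩ := Set.not_subset.1 hnsub
              intro hEq
              have : d ∈ D ∩ U := by rw [hEq]; exact hd.1
              exact hd.2 this.2
            have hIcount := shift_count hmin δs Set.inter_subset_left hIne hIneD
            have hIuv : (G.liftU).uverts (D ∩ U)
                ⊆ ((G.liftU).uverts D) ∩ ((G.liftU).uverts U) :=
              Set.subset_inter (uverts_mono Set.inter_subset_left)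
                (uverts_mono Set.inter_subset_right)
            have hIuvle : (((G.liftU).uverts (D ∩ U)).ncard : ℤ)
                ≤ (((G.liftU).uverts D) ∩ ((G.liftU).uverts U)).ncard := by
              exact_mod_cast Set.ncard_le_ncard hIuv (Set.toFinite _)
            rw [hDm] at hmUD'
            rw [hDn] at hnUD'
            linarith
    -- conclude
    obtain ⟨T, hTne, hdef, hor⟩ := main (p + 1)
    have hTcard : T.card ≤ p := by
      have := Finset.card_le_univ T
      rwa [ZMod.card p] at this
    have hUF : (⋃ δ ∈ T, shAdd G δ C) = G.liftEdges F := by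
      rcases hor with h | h
      · exact h
      · omega
    rw [hUF, ncard_liftEdges F (Set.toFinite F),
      ncard_uverts_liftEdges F (Set.toFinite _), Nat.card_zmod] at hdef
    -- cone-Laman count for F
    rw [hcc 0, hcc 1, hcc 2, hr1] at hCLF
    norm_num at hCLF
    -- combine
    have hFm : (F.ncard : ℤ) ≤ 2 * ((G.vertsIn F).ncard : ℤ) - 1 := by linarith
    have hp' : (3 : ℤ) ≤ (p : ℤ) := by exact_mod_cast hp3
    have hmul : (p : ℤ) * (F.ncard : ℤ)
        ≤ (p : ℤ) * (2 * ((G.vertsIn F).ncard : ℤ) - 1) :=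
      mul_le_mul_of_nonneg_left hFm (by linarith)
    push_cast at hdef
    linarith

end Forward

end CLProof

/-- Let `p` be an odd prime and `(G,γ)` a `ℤ/pℤ`-colored
graph with `n` vertices and `2n - 1` edges.  Then `(G,γ)` is a cone-Laman
graph if and only if its symmetric lift is Laman-sparse. -/
theorem coneLaman_iff_lift_lamanSparse (p : ℕ) (hp : p.Prime) (hodd : Odd p)
    (G : CMG (ZMod p))
    (hcard : (Nat.card G.E : ℤ) = 2 * Nat.card G.V - 1) :
    G.IsConeLaman ↔ (CMG.liftU G).LamanSparse := by
  haveI : Fact p.Prime := ⟨hp⟩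
  have hp3 : 3 ≤ p := by
    have h2 : p ≠ 2 := by
      intro h
      rw [h] at hodd
      exact (Nat.not_odd_iff_even.2 (by decide)) hodd
    have := hp.two_le
    omega
  constructor
  · intro h
    exact CLProof.lift_lamanSparse_of_cone hp3 h.1
  · intro h
    exact CLProof.isConeLaman_of_lift h hcard
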